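/- arXiv:2510.27451 — 3 statements merged into one kernel-verified Lean document; each statement's English description precedes it below -/
import Mathlib

section
/- Let b ∈ ℝ^d and let μ, ν be Borel probability measures on ℝ^d with finite first moments and common barycentre [μ] = [ν] = b. Then for every bi-martingale pair (γ,ζ) for (μ,ν), the push-forward measure ρ = ζ#γ is a Borel probability measure on ℝ^d with finite first moment satisfying ρ ≽_c μ and ρ ≽_c ν. -/
open MeasureTheory Filter Topology
open scoped ENNReal RealInnerProductSpace Classical

noncomputable section

/-- Second moment `m₂(μ) = ∫ ‖x‖² dμ`. -/
def m2 {d : ℕ} (μ : Measure (EuclideanSpace ℝ (Fin d))) : ℝ := ∫ x, ‖x‖ ^ 2 ∂μ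

/-- Barycentre `[μ] = ∫ x dμ`. -/
def bary {d : ℕ} (μ : Measure (EuclideanSpace ℝ (Fin d))) : EuclideanSpace ℝ (Fin d) :=
  ∫ x, x ∂μ

/-- `ConvexOrderLE μ ν` means `μ ≼_c ν`, i.e. `ν` dominates `μ` in the convex order:
`∫ φ dμ ≤ ∫ φ dν` for every convex `φ : ℝ^d → ℝ` integrable with respect to both. -/
def ConvexOrderLE {d : ℕ} (μ ν : Measure (EuclideanSpace ℝ (Fin d))) : Prop :=
  ∀ φ : EuclideanSpace ℝ (Fin d) → ℝ, ConvexOn ℝ Set.univ φ →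
    Integrable φ μ → Integrable φ ν → ∫ x, φ x ∂μ ≤ ∫ x, φ x ∂ν

/-- Admissible potentials for the Zolotarev-2 problem: differentiable functions whose
gradient is Lipschitz with constant `1`. -/
def ZolAdmissible {d : ℕ} (u : EuclideanSpace ℝ (Fin d) → ℝ) : Prop :=
  Differentiable ℝ u ∧ LipschitzWith 1 (fun x => gradient u x)

/-- The Zolotarev-2 distance. -/
def Z2 {d : ℕ} (μ ν : Measure (EuclideanSpace ℝ (Fin d))) : ℝ :=
  sSup {r : ℝ | ∃ u : EuclideanSpace ℝ (Fin d) → ℝ, ZolAdmissible u ∧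
    r = (∫ x, u x ∂μ) - ∫ x, u x ∂ν}

/-- `𝒞(μ,ν)`: the least second moment of a common convex dominant of `μ` and `ν`. -/
def Cmin {d : ℕ} (μ ν : Measure (EuclideanSpace ℝ (Fin d))) : ℝ :=
  sInf {r : ℝ | ∃ ρ : Measure (EuclideanSpace ℝ (Fin d)), IsProbabilityMeasure ρ ∧
    Integrable (fun x => ‖x‖ ^ 2) ρ ∧ ConvexOrderLE μ ρ ∧ ConvexOrderLE ν ρ ∧ r = m2 ρ}

/-- Bounded Borel vector field. -/
def BoundedBorel {d : ℕ} (Φ : EuclideanSpace ℝ (Fin d) → EuclideanSpace ℝ (Fin d)) : Prop :=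
  Measurable Φ ∧ ∃ C : ℝ, ∀ x, ‖Φ x‖ ≤ C

/-- A bi-martingale pair `(γ, ζ)` for `(μ, ν)`. -/
def IsBiMartingalePair {d : ℕ} (μ ν : Measure (EuclideanSpace ℝ (Fin d)))
    (γ : Measure (EuclideanSpace ℝ (Fin d) × EuclideanSpace ℝ (Fin d)))
    (ζ : EuclideanSpace ℝ (Fin d) × EuclideanSpace ℝ (Fin d) → EuclideanSpace ℝ (Fin d)) :
    Prop :=
  IsProbabilityMeasure γ ∧ γ.map Prod.fst = μ ∧ γ.map Prod.snd = ν ∧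
  Measurable ζ ∧ Integrable ζ γ ∧
  (∀ Φ, BoundedBorel Φ → ∫ p, ⟪Φ p.1, ζ p - p.1⟫ ∂γ = 0) ∧
  (∀ Ψ, BoundedBorel Ψ → ∫ p, ⟪Ψ p.2, ζ p - p.2⟫ ∂γ = 0)

/-- A martingale plan from `μ` to `ν`. -/
def IsMartingalePlan {d : ℕ} (μ ν : Measure (EuclideanSpace ℝ (Fin d)))
    (γ : Measure (EuclideanSpace ℝ (Fin d) × EuclideanSpace ℝ (Fin d))) : Prop :=
  IsProbabilityMeasure γ ∧ γ.map Prod.fst = μ ∧ γ.map Prod.snd = ν ∧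
  ∀ Φ, BoundedBorel Φ → ∫ p, ⟪Φ p.1, p.2 - p.1⟫ ∂γ = 0

/-- Convexity for `ℝ ∪ {+∞}`-valued functions (modelled in `EReal`). -/
def EConvexOn {d : ℕ} (f : EuclideanSpace ℝ (Fin d) → EReal) : Prop :=
  ∀ x y : EuclideanSpace ℝ (Fin d), ∀ t : ℝ, 0 ≤ t → t ≤ 1 →
    f (t • x + (1 - t) • y) ≤ (t : EReal) * f x + ((1 - t : ℝ) : EReal) * f y

/-- Strict convexity for `ℝ ∪ {+∞}`-valued functions. -/
def EStrictConvexOn {d : ℕ} (f : EuclideanSpace ℝ (Fin d) → EReal) : Prop :=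
  ∀ x y : EuclideanSpace ℝ (Fin d), x ≠ y → ∀ t : ℝ, 0 < t → t < 1 →
    f x ≠ ⊤ → f y ≠ ⊤ →
    f (t • x + (1 - t) • y) < (t : EReal) * f x + ((1 - t : ℝ) : EReal) * f y

/-- Superlinearity `f(z)/‖z‖ → +∞` for `EReal`-valued functions. -/
def ESuperlinear {d : ℕ} (f : EuclideanSpace ℝ (Fin d) → EReal) : Prop :=
  ∀ M : ℝ, ∃ R : ℝ, ∀ z, R ≤ ‖z‖ → ((M * ‖z‖ : ℝ) : EReal) ≤ f z

/-- Superlinearity `h(z)/‖z‖ → +∞` for real-valued functions. -/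
def SuperlinearReal {d : ℕ} (h : EuclideanSpace ℝ (Fin d) → ℝ) : Prop :=
  ∀ M : ℝ, ∃ R : ℝ, ∀ z, R ≤ ‖z‖ → M * ‖z‖ ≤ h z

/-- Integral of an `ℝ ∪ {+∞}`-valued function, with value `+∞` when the function fails to
be (almost everywhere finite and) integrable. -/
def eintegral {α : Type*} [MeasurableSpace α] (ρ : Measure α) (f : α → EReal) : EReal :=
  if Integrable (fun x => (f x).toReal) ρ ∧ ∀ᵐ x ∂ρ, f x ≠ ⊤ then
    ((∫ x, (f x).toReal ∂ρ : ℝ) : EReal)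
  else ⊤

/-- The coupling map `ζ̄` associated with a Zolotarev potential `u`. -/
def zetaBar {d : ℕ} (u : EuclideanSpace ℝ (Fin d) → ℝ)
    (p : EuclideanSpace ℝ (Fin d) × EuclideanSpace ℝ (Fin d)) : EuclideanSpace ℝ (Fin d) :=
  (1 / 2 : ℝ) • (p.1 + p.2) + (1 / 2 : ℝ) • (gradient u p.1 - gradient u p.2)


section Aux
open Set Metric
variable {E : Type*} [NormedAddCommGroup E] [InnerProductSpace ℝ E] [FiniteDimensional ℝ E]

lemma convex_continuous {φ : E → ℝ} (hφ : ConvexOn ℝ Set.univ φ) : Continuous φ := by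
  have := hφ.continuousOn_interior
  rw [interior_univ] at this
  exact continuousOn_univ.mp this

lemma exists_subgradient {φ : E → ℝ} (hφ : ConvexOn ℝ Set.univ φ) (q : E) :
    ∃ g : E, ∀ x, φ q + ⟪g, x - q⟫ ≤ φ x := by
  classical
  have hc : Continuous φ := convex_continuous hφ
  set S : Set (E × ℝ) := {p | φ p.1 < p.2} with hS
  have hSopen : IsOpen S := isOpen_lt (hc.comp continuous_fst) continuous_snd
  have hSconv : Convex ℝ S := by
    intro p hp r hr a b ha hb hab
    simp only [hS, Set.mem_setOf_eq] at *
    have h1 : φ (a • p.1 + b • r.1) ≤ a * φ p.1 + b * φ r.1 :=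
      hφ.2 (mem_univ _) (mem_univ _) ha hb hab
    have h2 : a * φ p.1 + b * φ r.1 < a * p.2 + b * r.2 := by
      rcases eq_or_lt_of_le ha with h | h
      · have hb1 : b = 1 := by linarith
        rw [← h, hb1]; simpa using hr
      · have ha2 : a * φ p.1 < a * p.2 := by exact (mul_lt_mul_iff_right₀ h).mpr hp
        have hb2 : b * φ r.1 ≤ b * r.2 := mul_le_mul_of_nonneg_left (le_of_lt hr) hb
        linarith
    exact lt_of_le_of_lt h1 h2
  have hqS : (q, φ q) ∉ S := by simp [hS]
  obtain ⟨f, hf⟩ := geometric_hahn_banach_open_point hSconv hSopen hqS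
  set L : E →L[ℝ] ℝ := f.comp (ContinuousLinearMap.inl ℝ E ℝ) with hL
  set c : ℝ := f (0, 1) with hcdef
  have hdecomp : ∀ y : E, ∀ t : ℝ, f (y, t) = L y + t * c := by
    intro y t
    have h0 : (y, t) = (y, (0:ℝ)) + t • ((0:E), (1:ℝ)) := by simp [Prod.ext_iff]
    rw [h0, map_add, f.map_smul]
    simp [hL, hcdef, ContinuousLinearMap.inl_apply]
  have hkey : ∀ y : E, ∀ t : ℝ, φ y < t → L y + t * c < L q + φ q * c := by
    intro y t ht
    have := hf (y, t) ht
    rwa [hdecomp, hdecomp] at this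
  have hcneg : c < 0 := by
    rcases lt_trichotomy c 0 with h | h | h
    · exact h
    · have := hkey q (φ q + 1) (by linarith)
      rw [h] at this; simp at this
    · have h1 := hkey q (φ q + 1) (by linarith)
      have hexp : (φ q + 1) * c = φ q * c + c := by ring
      linarith
  have hcc : (0:ℝ) < -c := by linarith
  have hcne : c ≠ 0 := ne_of_lt hcneg
  have hlim : ∀ y : E, L y + φ y * c ≤ L q + φ q * c := by
    intro y
    refine le_of_forall_pos_le_add ?_
    intro ε hε
    have hs : 0 < ε / (-c) := div_pos hε hcc
    have hk := hkey y (φ y + ε / (-c)) (by linarith)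
    have h2 : ε / (-c) * c = -ε := by
      rw [div_mul_eq_mul_div, div_neg, mul_div_assoc, div_self hcne, mul_one]
    have hexp : (φ y + ε / (-c)) * c = φ y * c + ε / (-c) * c := by ring
    linarith
  set ℓ : E →L[ℝ] ℝ := (-c)⁻¹ • L with hℓ
  refine ⟨(InnerProductSpace.toDual ℝ E).symm ℓ, fun x => ?_⟩
  rw [inner_sub_right, InnerProductSpace.toDual_symm_apply, InnerProductSpace.toDual_symm_apply]
  have hx := hlim x
  have hval : ℓ x - ℓ q = (-c)⁻¹ * (L x - L q) := by
    simp [hℓ, ContinuousLinearMap.smul_apply, smul_eq_mul]; ring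
  rw [sub_eq_add_neg, ← sub_eq_add_neg, hval]
  have h1 : L x - L q ≤ (φ x - φ q) * (-c) := by
    have : (φ x - φ q) * (-c) = φ q * c - φ x * c := by ring
    linarith
  have h2 := mul_le_mul_of_nonneg_left h1 (le_of_lt (inv_pos.mpr hcc))
  have h3 : (-c)⁻¹ * ((φ x - φ q) * (-c)) = φ x - φ q := by
    rw [mul_comm ((-c)⁻¹), mul_assoc, mul_inv_cancel₀ (ne_of_gt hcc), mul_one]
  linarith

lemma approx_subgrad {φ : E → ℝ} (hc : Continuous φ)
    (q : ℕ → E) (hq : DenseRange q) (g : ℕ → E)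
    (hg : ∀ k, ∀ y, φ (q k) + ⟪g k, y - q k⟫ ≤ φ y)
    (x : E) {ε : ℝ} (hε : 0 < ε) :
    ∃ k, φ x - ε ≤ φ (q k) + ⟪g k, x - q k⟫ := by
  classical
  obtain ⟨C, hC⟩ := (isCompact_closedBall x 2).exists_bound_of_continuousOn hc.continuousOn
  have hC0 : 0 ≤ C := le_trans (norm_nonneg _) (hC x (mem_closedBall_self (by norm_num)))
  -- bound on subgradients near x
  have hgb : ∀ k, q k ∈ ball x 1 → ‖g k‖ ≤ 2 * C := by
    intro k hk
    rcases eq_or_ne (g k) 0 with h0 | h0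
    · simp [h0]; linarith
    · set y := q k + ‖g k‖⁻¹ • g k with hy
      have hyb : y ∈ closedBall x 2 := by
        rw [mem_closedBall]
        have h1 : dist y (q k) ≤ 1 := by
          rw [dist_eq_norm, hy]
          simp [norm_smul, norm_inv, inv_mul_cancel₀ (norm_ne_zero_iff.mpr h0)]
        have h2 : dist (q k) x < 1 := mem_ball.mp hk
        calc dist y x ≤ dist y (q k) + dist (q k) x := dist_triangle _ _ _
          _ ≤ 2 := by linarith
      have := hg k y
      have hinner : ⟪g k, y - q k⟫ = ‖g k‖ := by
        rw [hy]
        simp only [add_sub_cancel_left]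
        rw [real_inner_smul_right, real_inner_self_eq_norm_sq]
        field_simp [norm_ne_zero_iff.mpr h0]
      rw [hinner] at this
      have hq1 : ‖φ (q k)‖ ≤ C := hC _ (ball_subset_closedBall (ball_subset_ball (by norm_num) hk))
      have hq2 : ‖φ y‖ ≤ C := hC _ hyb
      have := abs_le.mp hq1
      have := abs_le.mp hq2
      simp only [Real.norm_eq_abs] at *
      have hb1 := (abs_le.mp hq1).1
      have hb2 := (abs_le.mp hq2).2
      linarith
  -- continuity at x
  obtain ⟨δ', hδ'pos, hδ'⟩ := Metric.continuous_iff.mp hc x (ε/2) (by linarith)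
  set δ : ℝ := min 1 (min δ' (ε / (2 * (2 * C + 1)))) with hδ
  have hδpos : 0 < δ := by
    apply lt_min (by norm_num)
    exact lt_min hδ'pos (by positivity)
  obtain ⟨k, hk⟩ := hq.exists_dist_lt x hδpos
  rw [dist_comm] at hk
  have hk1 : q k ∈ ball x 1 := mem_ball.mpr (lt_of_lt_of_le hk (le_trans (min_le_left _ _) le_rfl))
  have hkδ' : dist (q k) x < δ' := lt_of_lt_of_le hk (le_trans (min_le_right _ _) (min_le_left _ _))
  have hkε : dist (q k) x ≤ ε / (2 * (2 * C + 1)) :=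
    le_of_lt (lt_of_lt_of_le hk (le_trans (min_le_right _ _) (min_le_right _ _)))
  have hφclose : |φ (q k) - φ x| < ε / 2 := by
    have := hδ' (q k) hkδ'
    rwa [Real.dist_eq] at this
  have hinner_bd : |⟪g k, x - q k⟫| ≤ ‖g k‖ * ‖x - q k‖ := abs_real_inner_le_norm _ _
  have hnorm : ‖x - q k‖ ≤ ε / (2 * (2 * C + 1)) := by
    rw [norm_sub_rev, ← dist_eq_norm]; exact hkε
  have hbound : ‖g k‖ * ‖x - q k‖ ≤ 2 * C * (ε / (2 * (2 * C + 1))) :=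
    mul_le_mul (hgb k hk1) hnorm (norm_nonneg _) (by linarith)
  have hfrac : 2 * C * (ε / (2 * (2 * C + 1))) ≤ ε / 2 := by
    rw [show 2 * C * (ε / (2 * (2 * C + 1))) = ε * (2 * C) / (2 * (2 * C + 1)) from by ring,
      div_le_div_iff₀ (by positivity) (by norm_num : (0:ℝ) < 2)]
    nlinarith
  refine ⟨k, ?_⟩
  have h1 : -(ε/2) ≤ ⟪g k, x - q k⟫ :=
    (abs_le.mp (le_trans hinner_bd (le_trans hbound hfrac))).1
  have h2 := (abs_lt.mp hφclose).1
  linarith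

end Aux

lemma key_ineq {d : ℕ}
    (γ : Measure (EuclideanSpace ℝ (Fin d) × EuclideanSpace ℝ (Fin d))) [IsProbabilityMeasure γ]
    (ζ X : EuclideanSpace ℝ (Fin d) × EuclideanSpace ℝ (Fin d) → EuclideanSpace ℝ (Fin d))
    (hζm : Measurable ζ) (hXm : Measurable X)
    (hζi : Integrable ζ γ) (hXi : Integrable X γ)
    (hmart : ∀ Φ, BoundedBorel Φ → ∫ p, ⟪Φ (X p), ζ p - X p⟫ ∂γ = 0)
    (φ : EuclideanSpace ℝ (Fin d) → ℝ) (hφ : ConvexOn ℝ Set.univ φ)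
    (h1 : Integrable (fun p => φ (X p)) γ) (h2 : Integrable (fun p => φ (ζ p)) γ) :
    ∫ p, φ (X p) ∂γ ≤ ∫ p, φ (ζ p) ∂γ := by
  classical
  have hc : Continuous φ := convex_continuous hφ
  refine le_of_forall_pos_le_add ?_
  intro ε hε
  obtain ⟨q, hq⟩ := TopologicalSpace.exists_dense_seq (EuclideanSpace ℝ (Fin d))
  choose g hg using fun k => exists_subgradient hφ (q k)
  have hex : ∀ x, ∃ k, φ x - ε ≤ φ (q k) + ⟪g k, x - q k⟫ := fun x =>
    approx_subgrad hc q hq g hg x hε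
  set N : EuclideanSpace ℝ (Fin d) → ℕ := fun x => Nat.find (hex x) with hN
  have hNP : ∀ x, φ x - ε ≤ φ (q (N x)) + ⟪g (N x), x - q (N x)⟫ := fun x => Nat.find_spec (hex x)
  have hNm : Measurable N := by
    apply measurable_find
    intro k
    have hfm : Measurable fun x : EuclideanSpace ℝ (Fin d) => φ x - ε :=
      hc.measurable.sub measurable_const
    have hgm : Measurable fun x : EuclideanSpace ℝ (Fin d) => φ (q k) + ⟪g k, x - q k⟫ := by
      apply Measurable.add measurable_const
      exact Measurable.inner measurable_const (measurable_id.sub measurable_const)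
    exact measurableSet_le hfm hgm
  set Φm : ℕ → EuclideanSpace ℝ (Fin d) → EuclideanSpace ℝ (Fin d) :=
    fun m x => if N x ≤ m then g (N x) else 0 with hΦm
  have hΦmeas : ∀ m, Measurable (Φm m) := by
    intro m
    have heq : Φm m = (fun k : ℕ => if k ≤ m then g k else 0) ∘ N := by
      funext x; simp [hΦm, Function.comp]
    rw [heq]
    exact measurable_from_nat.comp hNm
  have hΦbd : ∀ m, ∃ C, ∀ x, ‖Φm m x‖ ≤ C := by
    intro m
    refine ⟨∑ k ∈ Finset.range (m+1), ‖g k‖, fun x => ?_⟩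
    by_cases h : N x ≤ m
    · simp only [hΦm, if_pos h]
      exact Finset.single_le_sum (f := fun k => ‖g k‖) (fun i _ => norm_nonneg _)
        (Finset.mem_range.mpr (Nat.lt_succ_of_le h))
    · simp only [hΦm, if_neg h, norm_zero]
      exact Finset.sum_nonneg fun i _ => norm_nonneg _
  have hmart' : ∀ m, ∫ p, ⟪Φm m (X p), ζ p - X p⟫ ∂γ = 0 := fun m =>
    hmart (Φm m) ⟨hΦmeas m, hΦbd m⟩
  set G : ℕ → EuclideanSpace ℝ (Fin d) × EuclideanSpace ℝ (Fin d) → ℝ :=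
    fun m p => if N (X p) ≤ m then φ (ζ p) - φ (X p) + ε else 0 with hG
  have hpt : ∀ m, ∀ p, ⟪Φm m (X p), ζ p - X p⟫ ≤ G m p := by
    intro m p
    by_cases h : N (X p) ≤ m
    · simp only [hΦm, hG, if_pos h]
      have hsplit : ζ p - X p = (ζ p - q (N (X p))) - (X p - q (N (X p))) := by abel
      rw [hsplit, inner_sub_right]
      have ha := hg (N (X p)) (ζ p)
      have hb := hNP (X p)
      linarith
    · simp only [hΦm, hG, if_neg h, inner_zero_left, le_refl]
  have hBi : Integrable (fun p => |φ (ζ p) - φ (X p) + ε|) γ :=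
    ((h2.sub h1).add (integrable_const ε)).abs
  have hBi' : Integrable (fun p => φ (ζ p) - φ (X p) + ε) γ :=
    (h2.sub h1).add (integrable_const ε)
  have hGi : ∀ m, Integrable (G m) γ := by
    intro m
    have hset : MeasurableSet {p : EuclideanSpace ℝ (Fin d) × EuclideanSpace ℝ (Fin d) |
        N (X p) ≤ m} := (hNm.comp hXm) measurableSet_Iic
    have hmeas : Measurable (G m) := by
      apply Measurable.ite hset
      · exact ((hc.measurable.comp hζm).sub (hc.measurable.comp hXm)).add measurable_const
      · exact measurable_const
    refine Integrable.mono' hBi hmeas.aestronglyMeasurable ?_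
    filter_upwards with p
    by_cases h : N (X p) ≤ m
    · simp only [hG, if_pos h, Real.norm_eq_abs]; exact le_rfl
    · simp only [hG, if_neg h, norm_zero]; exact abs_nonneg _
  have hFi : ∀ m, Integrable (fun p => ⟪Φm m (X p), ζ p - X p⟫) γ := by
    intro m
    obtain ⟨C, hC⟩ := hΦbd m
    have hC0 : 0 ≤ C := le_trans (norm_nonneg _) (hC 0)
    have hmeas : Measurable fun p => ⟪Φm m (X p), ζ p - X p⟫ :=
      Measurable.inner ((hΦmeas m).comp hXm) (hζm.sub hXm)
    refine Integrable.mono' ((hζi.norm.add hXi.norm).const_mul C)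
      hmeas.aestronglyMeasurable ?_
    filter_upwards with p
    rw [Real.norm_eq_abs]
    calc |⟪Φm m (X p), ζ p - X p⟫| ≤ ‖Φm m (X p)‖ * ‖ζ p - X p‖ := abs_real_inner_le_norm _ _
      _ ≤ C * (‖ζ p‖ + ‖X p‖) :=
          mul_le_mul (hC _) (norm_sub_le _ _) (norm_nonneg _) hC0
  have hstep : ∀ m, 0 ≤ ∫ p, G m p ∂γ := by
    intro m
    have hmono := integral_mono (hFi m) (hGi m) (hpt m)
    rw [hmart' m] at hmono
    exact hmono
  have hlim : Tendsto (fun m => ∫ p, G m p ∂γ) atTop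
      (𝓝 (∫ p, (φ (ζ p) - φ (X p) + ε) ∂γ)) := by
    refine tendsto_integral_of_dominated_convergence (fun p => |φ (ζ p) - φ (X p) + ε|)
      (fun m => (hGi m).aestronglyMeasurable)
      hBi (fun m => ?_) ?_
    · filter_upwards with p
      by_cases h : N (X p) ≤ m
      · simp only [hG, if_pos h, Real.norm_eq_abs]; exact le_rfl
      · simp only [hG, if_neg h, norm_zero]; exact abs_nonneg _
    · filter_upwards with p
      refine Tendsto.congr' ?_ tendsto_const_nhds
      filter_upwards [eventually_ge_atTop (N (X p))] with m hm
      simp [hG, hm]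
  have h0 : 0 ≤ ∫ p, (φ (ζ p) - φ (X p) + ε) ∂γ := ge_of_tendsto' hlim hstep
  have hsplit : ∫ p, (φ (ζ p) - φ (X p) + ε) ∂γ
      = (∫ p, φ (ζ p) ∂γ) - (∫ p, φ (X p) ∂γ) + ε := by
    have hsub : Integrable (fun p => φ (ζ p) - φ (X p)) γ := h2.sub h1
    rw [integral_add hsub (integrable_const ε), integral_sub h2 h1, integral_const]
    simp [measure_univ]
  rw [hsplit] at h0
  linarith

theorem stmt_5
    {d : ℕ} (b : EuclideanSpace ℝ (Fin d)) (μ ν : Measure (EuclideanSpace ℝ (Fin d)))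
    [IsProbabilityMeasure μ] [IsProbabilityMeasure ν]
    (hμ1 : Integrable (fun x => ‖x‖) μ) (hν1 : Integrable (fun x => ‖x‖) ν)
    (hμb : bary μ = b) (hνb : bary ν = b)
    (γ : Measure (EuclideanSpace ℝ (Fin d) × EuclideanSpace ℝ (Fin d))) (ζ : EuclideanSpace ℝ (Fin d) × EuclideanSpace ℝ (Fin d) → EuclideanSpace ℝ (Fin d))
    (hpair : IsBiMartingalePair μ ν γ ζ) :
    IsProbabilityMeasure (γ.map ζ) ∧ Integrable (fun x => ‖x‖) (γ.map ζ) ∧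
    ConvexOrderLE μ (γ.map ζ) ∧ ConvexOrderLE ν (γ.map ζ) := by
  obtain ⟨hγp, hfst, hsnd, hζm, hζi, hmart1, hmart2⟩ := hpair
  haveI := hγp
  have hprob : IsProbabilityMeasure (γ.map ζ) := Measure.isProbabilityMeasure_map hζm.aemeasurable
  have hfsti : Integrable (fun p : EuclideanSpace ℝ (Fin d) × EuclideanSpace ℝ (Fin d) => ‖p.1‖) γ := by
    have h := hμ1
    rw [← hfst] at h
    simpa [Function.comp_def] using
      (integrable_map_measure continuous_norm.aestronglyMeasurable measurable_fst.aemeasurable).mp h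
  have hsndi : Integrable (fun p : EuclideanSpace ℝ (Fin d) × EuclideanSpace ℝ (Fin d) => ‖p.2‖) γ := by
    have h := hν1
    rw [← hsnd] at h
    simpa [Function.comp_def] using
      (integrable_map_measure continuous_norm.aestronglyMeasurable measurable_snd.aemeasurable).mp h
  have hXi1 : Integrable (fun p : EuclideanSpace ℝ (Fin d) × EuclideanSpace ℝ (Fin d) => p.1) γ :=
    (integrable_norm_iff measurable_fst.aestronglyMeasurable).mp hfsti
  have hXi2 : Integrable (fun p : EuclideanSpace ℝ (Fin d) × EuclideanSpace ℝ (Fin d) => p.2) γ :=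
    (integrable_norm_iff measurable_snd.aestronglyMeasurable).mp hsndi
  have hρi : Integrable (fun x => ‖x‖) (γ.map ζ) := by
    refine (integrable_map_measure continuous_norm.aestronglyMeasurable hζm.aemeasurable).mpr ?_
    simpa [Function.comp_def] using hζi.norm
  refine ⟨hprob, hρi, ?_, ?_⟩
  · intro φ hconv hμint hρint
    have hφc : Continuous φ := convex_continuous hconv
    have h1 : Integrable (fun p : EuclideanSpace ℝ (Fin d) × EuclideanSpace ℝ (Fin d) => φ p.1) γ := by
      have h := hμint; rw [← hfst] at h
      simpa [Function.comp_def] using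
        (integrable_map_measure hφc.aestronglyMeasurable measurable_fst.aemeasurable).mp h
    have h2 : Integrable (fun p => φ (ζ p)) γ := by
      simpa [Function.comp_def] using
        (integrable_map_measure hφc.aestronglyMeasurable hζm.aemeasurable).mp hρint
    have key := key_ineq γ ζ (fun p => p.1) hζm measurable_fst hζi hXi1 hmart1 φ hconv h1 h2
    rw [← hfst, integral_map measurable_fst.aemeasurable hφc.aestronglyMeasurable,
      integral_map hζm.aemeasurable hφc.aestronglyMeasurable]
    exact key
  · intro φ hconv hνint hρint
    have hφc : Continuous φ := convex_continuous hconv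
    have h1 : Integrable (fun p : EuclideanSpace ℝ (Fin d) × EuclideanSpace ℝ (Fin d) => φ p.2) γ := by
      have h := hνint; rw [← hsnd] at h
      simpa [Function.comp_def] using
        (integrable_map_measure hφc.aestronglyMeasurable measurable_snd.aemeasurable).mp h
    have h2 : Integrable (fun p => φ (ζ p)) γ := by
      simpa [Function.comp_def] using
        (integrable_map_measure hφc.aestronglyMeasurable hζm.aemeasurable).mp hρint
    have key := key_ineq γ ζ (fun p => p.2) hζm measurable_snd hζi hXi2 hmart2 φ hconv h1 h2
    rw [← hsnd, integral_map measurable_snd.aemeasurable hφc.aestronglyMeasurable,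
      integral_map hζm.aemeasurable hφc.aestronglyMeasurable]
    exact key

end
end

section
/- Let b ∈ ℝ^d and let μ, ν be Borel probability measures on ℝ^d with finite second moments and common barycentre [μ] = [ν] = b. Then μ ≼_c ν if and only if Z₂(μ,ν) = (m₂(ν) − m₂(μ))/2, and this holds if and only if the function u(x) = −|x|²/2 attains the supremum defining Z₂(μ,ν). -/
open MeasureTheory Filter Topology
open scoped ENNReal RealInnerProductSpace Classical

noncomputable section

variable {d : ℕ}

local notation "E" => EuclideanSpace ℝ (Fin d)

/-- Gradient from a quadratic remainder bound. -/
lemma hasGradientAt_of_quad {f : E → ℝ} {a x : E} {C : ℝ} (hC : 0 ≤ C)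
    (h : ∀ y, |f y - f x - ⟪a, y - x⟫| ≤ C * ‖y - x‖ ^ 2) : HasGradientAt f a x := by
  rw [hasGradientAt_iff_hasFDerivAt, hasFDerivAt_iff_isLittleO_nhds_zero]
  rw [Asymptotics.isLittleO_iff]
  intro c hc
  rw [Metric.eventually_nhds_iff]
  refine ⟨c / (C + 1), by positivity, fun {h'} hh' => ?_⟩
  have h1 : ‖h'‖ < c / (C + 1) := by simpa [dist_eq_norm] using hh'
  have h2 := h (x + h')
  simp only [add_sub_cancel_left] at h2
  have h3 : InnerProductSpace.toDual ℝ (EuclideanSpace ℝ (Fin d)) a h' = ⟪a, h'⟫ := rfl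
  rw [Real.norm_eq_abs, h3]
  calc |f (x + h') - f x - ⟪a, h'⟫| ≤ C * ‖h'‖ ^ 2 := h2
    _ = C * ‖h'‖ * ‖h'‖ := by ring
    _ ≤ c * ‖h'‖ := by
        apply mul_le_mul_of_nonneg_right _ (norm_nonneg _)
        calc C * ‖h'‖ ≤ C * (c / (C + 1)) := mul_le_mul_of_nonneg_left h1.le hC
          _ ≤ c := by rw [mul_div_assoc']; rw [div_le_iff₀ (by positivity)]; nlinarith

open InnerProductSpace in
/-- Quadratic Taylor-type bound for a function with 1-Lipschitz gradient. -/
lemma taylor_bound {u : E → ℝ} (hu : Differentiable ℝ u)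
    (hL : LipschitzWith 1 (fun x => gradient u x)) (x y : E) :
    |u y - u x - ⟪gradient u x, y - x⟫| ≤ ‖y - x‖ ^ 2 := by
  set a := gradient u x with ha
  set s : Set E := Metric.closedBall x ‖y - x‖ with hs
  have hxs : x ∈ s := Metric.mem_closedBall_self (norm_nonneg _)
  have hys : y ∈ s := by simp [hs, Metric.mem_closedBall, dist_eq_norm]
  have hder : ∀ z ∈ s, HasFDerivWithinAt (fun z => u z - ⟪a, z⟫)
      (toDual ℝ (EuclideanSpace ℝ (Fin d)) (gradient u z) - toDual ℝ (EuclideanSpace ℝ (Fin d)) a) s z := by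
    intro z _
    have h1 : HasFDerivAt u (toDual ℝ (EuclideanSpace ℝ (Fin d)) (gradient u z)) z :=
      (hu z).hasGradientAt.hasFDerivAt
    have h2 := (toDual ℝ (EuclideanSpace ℝ (Fin d)) a).hasFDerivAt (x := z)
    have := h1.sub h2
    change HasFDerivAt (fun z => u z - ⟪a, z⟫) _ z at this
    exact this.hasFDerivWithinAt
  have hbound : ∀ z ∈ s, ‖toDual ℝ (EuclideanSpace ℝ (Fin d)) (gradient u z)
      - toDual ℝ (EuclideanSpace ℝ (Fin d)) a‖ ≤ ‖y - x‖ := by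
    intro z hz
    rw [← map_sub, (toDual ℝ (EuclideanSpace ℝ (Fin d))).norm_map]
    have := hL.dist_le_mul z x
    simp only [NNReal.coe_one, one_mul, dist_eq_norm] at this
    calc ‖gradient u z - a‖ ≤ ‖z - x‖ := this
      _ ≤ ‖y - x‖ := by simpa [hs, Metric.mem_closedBall, dist_eq_norm] using hz
  have key := (convex_closedBall x ‖y - x‖).norm_image_sub_le_of_norm_hasFDerivWithin_le
    hder hbound hxs hys
  have heq : (u y - ⟪a, y⟫) - (u x - ⟪a, x⟫) = u y - u x - ⟪a, y - x⟫ := by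
    rw [inner_sub_right]; ring
  rw [heq] at key
  calc |u y - u x - ⟪a, y - x⟫| ≤ ‖y - x‖ * ‖y - x‖ := key
    _ = ‖y - x‖ ^ 2 := (sq ‖y - x‖).symm

lemma integrable_norm_of_m2 {μ : Measure E} [IsProbabilityMeasure μ]
    (hμ2 : Integrable (fun x => ‖x‖ ^ 2) μ) : Integrable (fun x : E => ‖x‖) μ := by
  refine Integrable.mono' (integrable_const (1 : ℝ) |>.add hμ2)
    (continuous_norm.aestronglyMeasurable) (Filter.Eventually.of_forall fun x => ?_)
  have : |‖x‖| ≤ 1 + ‖x‖ ^ 2 := by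
    rw [abs_of_nonneg (norm_nonneg x)]; nlinarith [norm_nonneg x, sq_nonneg (‖x‖ - 1)]
  simpa using this

lemma integrable_id_of_m2 {μ : Measure E} [IsProbabilityMeasure μ]
    (hμ2 : Integrable (fun x => ‖x‖ ^ 2) μ) : Integrable (fun x : E => x) μ := by
  have h := integrable_norm_of_m2 hμ2
  exact (integrable_norm_iff aestronglyMeasurable_id).mp (by simpa using h)

lemma integrable_inner_of_m2 {μ : Measure E} [IsProbabilityMeasure μ]
    (hμ2 : Integrable (fun x => ‖x‖ ^ 2) μ) (a : E) :
    Integrable (fun x : E => ⟪a, x⟫) μ := by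
  refine Integrable.mono' ((integrable_norm_of_m2 hμ2).const_mul ‖a‖)
    ((continuous_const.inner continuous_id).aestronglyMeasurable)
    (Filter.Eventually.of_forall fun x => ?_)
  simpa [Real.norm_eq_abs] using abs_real_inner_le_norm a x

lemma integral_inner_eq {μ : Measure E} [IsProbabilityMeasure μ]
    (hμ2 : Integrable (fun x => ‖x‖ ^ 2) μ) (a : E) :
    ∫ x, ⟪a, x⟫ ∂μ = ⟪a, bary μ⟫ := by
  rw [bary, ← integral_inner (integrable_id_of_m2 hμ2) a]

/-- Admissible potentials are integrable. -/
lemma admissible_integrable {u : E → ℝ} (hu : Differentiable ℝ u)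
    (hL : LipschitzWith 1 (fun x => gradient u x))
    {μ : Measure E} [IsProbabilityMeasure μ]
    (hμ2 : Integrable (fun x => ‖x‖ ^ 2) μ) : Integrable u μ := by
  refine Integrable.mono'
    ((integrable_const |u 0| |>.add ((integrable_norm_of_m2 hμ2).const_mul ‖gradient u 0‖)).add hμ2)
    hu.continuous.aestronglyMeasurable (Filter.Eventually.of_forall fun x => ?_)
  have h := taylor_bound hu hL 0 x
  simp only [sub_zero] at h
  have h2 : |⟪gradient u 0, x⟫| ≤ ‖gradient u 0‖ * ‖x‖ := abs_real_inner_le_norm _ _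
  have : |u x| ≤ |u 0| + ‖gradient u 0‖ * ‖x‖ + ‖x‖ ^ 2 := by
    have := abs_sub_abs_le_abs_sub (u x) (u 0 + ⟪gradient u 0, x⟫)
    have h3 : |u 0 + ⟪gradient u 0, x⟫| ≤ |u 0| + |⟪gradient u 0, x⟫| := abs_add_le _ _
    have h4 : |u x - (u 0 + ⟪gradient u 0, x⟫)| = |u x - u 0 - ⟪gradient u 0, x⟫| := by
      ring_nf
    nlinarith
  simpa using this


/-- Convexity from a monotone gradient. -/
lemma convexOn_of_monotone_gradient {v : E → ℝ} (hv : Differentiable ℝ v)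
    (hmono : ∀ a b : E, 0 ≤ ⟪gradient v a - gradient v b, a - b⟫) :
    ConvexOn ℝ Set.univ v := by
  refine ⟨convex_univ, fun x _ y _ s t hs ht hst => ?_⟩
  set c : ℝ → E := fun r => x + r • (y - x) with hc
  have hcd : ∀ r : ℝ, HasDerivAt c (y - x) r := by
    intro r
    have h1 : HasDerivAt (fun r : ℝ => r • (y - x)) ((1:ℝ) • (y - x)) r :=
      (hasDerivAt_id r).smul_const (y - x)
    rw [one_smul] at h1
    exact h1.const_add x
  have hg : ∀ r : ℝ, HasDerivAt (fun r => v (c r)) ⟪gradient v (c r), y - x⟫ r := by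
    intro r
    have h1 : HasFDerivAt v (InnerProductSpace.toDual ℝ (EuclideanSpace ℝ (Fin d))
        (gradient v (c r))) (c r) := (hv (c r)).hasGradientAt.hasFDerivAt
    exact h1.comp_hasDerivAt r (hcd r)
  have hmonod : Monotone (deriv fun r => v (c r)) := by
    intro r s hrs
    rw [(hg r).deriv, (hg s).deriv]
    have h2 := hmono (c s) (c r)
    have h3 : c s - c r = (s - r) • (y - x) := by
      simp only [hc]
      rw [sub_smul]
      abel
    rw [h3, real_inner_smul_right, inner_sub_left] at h2
    rcases eq_or_lt_of_le hrs with h | h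
    · rw [h]
    · nlinarith
  have hconv : ConvexOn ℝ Set.univ (fun r => v (c r)) :=
    Monotone.convexOn_univ_of_deriv (fun r => (hg r).differentiableAt) hmonod
  have := hconv.2 (Set.mem_univ (0:ℝ)) (Set.mem_univ (1:ℝ)) hs ht hst
  simp only [smul_eq_mul, mul_zero, mul_one, zero_add] at this
  have hc0 : c 0 = x := by simp [hc]
  have hct : c t = s • x + t • y := by
    simp only [hc, smul_sub]
    have hs' : s = 1 - t := by linarith
    rw [hs', sub_smul, one_smul]
    abel
  have hc1 : c 1 = y := by simp [hc]
  rw [hc0, hc1] at this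
  rw [← hct]
  exact this

/-- The quadratic potential. -/
lemma hasGradientAt_half_sq (x : E) :
    HasGradientAt (fun z : E => ‖z‖ ^ 2 / 2) x x := by
  apply hasGradientAt_of_quad (C := 1) zero_le_one
  intro y
  have hexp : ‖y - x‖ ^ 2 = ‖y‖ ^ 2 - 2 * ⟪y, x⟫ + ‖x‖ ^ 2 := by
    rw [@norm_sub_sq_real]
  have hxy : ⟪x, y - x⟫ = ⟪y, x⟫ - ‖x‖ ^ 2 := by
    rw [inner_sub_right, real_inner_comm, real_inner_self_eq_norm_sq]
  rw [hxy]
  have : ‖y‖ ^ 2 / 2 - ‖x‖ ^ 2 / 2 - (⟪y, x⟫ - ‖x‖ ^ 2) = ‖y - x‖ ^ 2 / 2 := by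
    rw [hexp]; ring
  rw [this, abs_of_nonneg (by positivity)]
  nlinarith [sq_nonneg ‖y - x‖]

lemma hasGradientAt_u0 (x : E) :
    HasGradientAt (fun z : E => -(‖z‖ ^ 2) / 2) (-x) x := by
  apply hasGradientAt_of_quad (C := 1) zero_le_one
  intro y
  have hexp : ‖y - x‖ ^ 2 = ‖y‖ ^ 2 - 2 * ⟪y, x⟫ + ‖x‖ ^ 2 := by
    rw [@norm_sub_sq_real]
  have hxy : ⟪-x, y - x⟫ = -⟪y, x⟫ + ‖x‖ ^ 2 := by
    rw [inner_neg_left, inner_sub_right, real_inner_comm, real_inner_self_eq_norm_sq]; ring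
  rw [hxy]
  have : -(‖y‖ ^ 2) / 2 - -(‖x‖ ^ 2) / 2 - (-⟪y, x⟫ + ‖x‖ ^ 2) = -(‖y - x‖ ^ 2) / 2 := by
    rw [hexp]; ring
  rw [this, abs_div, abs_neg, abs_of_nonneg (by positivity), abs_of_nonneg (by norm_num : (0:ℝ) ≤ 2)]
  nlinarith [sq_nonneg ‖y - x‖]

lemma zolAdmissible_u0 : ZolAdmissible (fun x : E => -(‖x‖ ^ 2) / 2) := by
  have hgrad : ∀ x : E, gradient (fun z : E => -(‖z‖ ^ 2) / 2) x = -x :=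
    fun x => (hasGradientAt_u0 x).gradient
  constructor
  · exact fun x => (hasGradientAt_u0 x).differentiableAt
  · have : (fun x : E => gradient (fun z : E => -(‖z‖ ^ 2) / 2) x) = fun x : E => -x :=
      funext hgrad
    rw [this]
    exact (LipschitzWith.id (α := E)).neg


lemma integral_u0 {μ : Measure E} [IsProbabilityMeasure μ]
    (hμ2 : Integrable (fun x => ‖x‖ ^ 2) μ) :
    ∫ x, -(‖x‖ ^ 2) / 2 ∂μ = -(m2 μ) / 2 := by
  rw [integral_div, m2]
  rw [integral_neg]

lemma u0_gap {μ ν : Measure E} [IsProbabilityMeasure μ] [IsProbabilityMeasure ν]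
    (hμ2 : Integrable (fun x => ‖x‖ ^ 2) μ) (hν2 : Integrable (fun x => ‖x‖ ^ 2) ν) :
    (∫ x, -(‖x‖ ^ 2) / 2 ∂μ) - (∫ x, -(‖x‖ ^ 2) / 2 ∂ν) = (m2 ν - m2 μ) / 2 := by
  rw [integral_u0 hμ2, integral_u0 hν2]; ring

/-- Under the convex order, every admissible potential has gap at most `(m₂ν - m₂μ)/2`. -/
lemma gap_le_of_convexOrder {μ ν : Measure E} [IsProbabilityMeasure μ] [IsProbabilityMeasure ν]
    (hμ2 : Integrable (fun x => ‖x‖ ^ 2) μ) (hν2 : Integrable (fun x => ‖x‖ ^ 2) ν)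
    (hco : ConvexOrderLE μ ν) {u : E → ℝ} (hadm : ZolAdmissible u) :
    (∫ x, u x ∂μ) - ∫ x, u x ∂ν ≤ (m2 ν - m2 μ) / 2 := by
  obtain ⟨hu, hL⟩ := hadm
  set v : E → ℝ := fun x => u x + ‖x‖ ^ 2 / 2 with hv
  have hgrad : ∀ x : E, HasGradientAt v (gradient u x + x) x := by
    intro x
    rw [hasGradientAt_iff_hasFDerivAt, map_add]
    exact ((hu x).hasGradientAt.hasFDerivAt).add (hasGradientAt_half_sq x).hasFDerivAt
  have hvdiff : Differentiable ℝ v := fun x => (hgrad x).differentiableAt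
  have hvconv : ConvexOn ℝ Set.univ v := by
    apply convexOn_of_monotone_gradient hvdiff
    intro a c
    rw [(hgrad a).gradient, (hgrad c).gradient]
    have h1 : gradient u a + a - (gradient u c + c) = (gradient u a - gradient u c) + (a - c) := by
      abel
    rw [h1, inner_add_left, real_inner_self_eq_norm_sq]
    have h2 : |⟪gradient u a - gradient u c, a - c⟫| ≤ ‖gradient u a - gradient u c‖ * ‖a - c‖ :=
      abs_real_inner_le_norm _ _
    have h3 : ‖gradient u a - gradient u c‖ ≤ ‖a - c‖ := by
      have := hL.dist_le_mul a c
      simpa [dist_eq_norm] using this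
    have h4 := abs_le.mp h2
    nlinarith [norm_nonneg (a - c), norm_nonneg (gradient u a - gradient u c)]
  have hintμ : Integrable u μ := admissible_integrable hu hL hμ2
  have hintν : Integrable u ν := admissible_integrable hu hL hν2
  have key := hco v hvconv (hintμ.add (hμ2.div_const 2)) (hintν.add (hν2.div_const 2))
  rw [integral_add hintμ (hμ2.div_const 2), integral_add hintν (hν2.div_const 2),
    integral_div, integral_div] at key
  have hm2μ : ∫ x, ‖x‖ ^ 2 ∂μ = m2 μ := rfl
  have hm2ν : ∫ x, ‖x‖ ^ 2 ∂ν = m2 ν := rfl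
  rw [hm2μ, hm2ν] at key
  linarith

/-- Every admissible gap is bounded, using equal barycentres. -/
lemma gap_le_bound {b : E} {μ ν : Measure E} [IsProbabilityMeasure μ] [IsProbabilityMeasure ν]
    (hμ2 : Integrable (fun x => ‖x‖ ^ 2) μ) (hν2 : Integrable (fun x => ‖x‖ ^ 2) ν)
    (hμb : bary μ = b) (hνb : bary ν = b) {u : E → ℝ} (hadm : ZolAdmissible u) :
    (∫ x, u x ∂μ) - ∫ x, u x ∂ν ≤ m2 μ + m2 ν := by
  obtain ⟨hu, hL⟩ := hadm
  set a : E := gradient u 0 with ha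
  set w : E → ℝ := fun x => u x - u 0 - ⟪a, x⟫ with hw
  have hwb : ∀ x, |w x| ≤ ‖x‖ ^ 2 := by
    intro x
    have := taylor_bound hu hL 0 x
    simp only [sub_zero] at this
    exact this
  have hdecomp : ∀ (ρ : Measure E), IsProbabilityMeasure ρ → Integrable (fun x => ‖x‖ ^ 2) ρ →
      ∫ x, u x ∂ρ = (∫ x, w x ∂ρ) + u 0 + ⟪a, bary ρ⟫ := by
    intro ρ hρ hρ2
    have hint : Integrable u ρ := admissible_integrable hu hL hρ2
    have hwint : Integrable w ρ := (hint.sub (integrable_const (u 0))).sub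
      (integrable_inner_of_m2 hρ2 a)
    have : ∀ x, u x = w x + u 0 + ⟪a, x⟫ := fun x => by simp only [hw]; ring
    calc ∫ x, u x ∂ρ = ∫ x, (w x + u 0 + ⟪a, x⟫) ∂ρ := by
          congr 1; funext x; exact this x
      _ = (∫ x, w x ∂ρ) + u 0 + ⟪a, bary ρ⟫ := by
          have h1 : Integrable (fun x => w x + u 0) ρ := hwint.add (integrable_const (u 0))
          rw [integral_add h1 (integrable_inner_of_m2 hρ2 a),
            integral_add hwint (integrable_const (u 0)), integral_const,
            integral_inner_eq hρ2 a]
          simp [measure_univ]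
  have hwμ : |∫ x, w x ∂μ| ≤ m2 μ := by
    have hint : Integrable u μ := admissible_integrable hu hL hμ2
    have hwint : Integrable w μ := (hint.sub (integrable_const (u 0))).sub
      (integrable_inner_of_m2 hμ2 a)
    calc |∫ x, w x ∂μ| ≤ ∫ x, |w x| ∂μ := by
          simpa [Real.norm_eq_abs] using norm_integral_le_integral_norm (μ := μ) w
      _ ≤ ∫ x, ‖x‖ ^ 2 ∂μ := integral_mono hwint.abs hμ2 (fun x => hwb x)
      _ = m2 μ := rfl
  have hwν : |∫ x, w x ∂ν| ≤ m2 ν := by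
    have hint : Integrable u ν := admissible_integrable hu hL hν2
    have hwint : Integrable w ν := (hint.sub (integrable_const (u 0))).sub
      (integrable_inner_of_m2 hν2 a)
    calc |∫ x, w x ∂ν| ≤ ∫ x, |w x| ∂ν := by
          simpa [Real.norm_eq_abs] using norm_integral_le_integral_norm (μ := ν) w
      _ ≤ ∫ x, ‖x‖ ^ 2 ∂ν := integral_mono hwint.abs hν2 (fun x => hwb x)
      _ = m2 ν := rfl
  rw [hdecomp μ inferInstance hμ2, hdecomp ν inferInstance hν2, hμb, hνb]
  have h1 := abs_le.mp hwμ
  have h2 := abs_le.mp hwν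
  linarith


/-- A continuous convex function on `ℝ^d` has an affine minorant. -/
lemma exists_linear_minorant {φ : E → ℝ} (hφ : ConvexOn ℝ Set.univ φ)
    (hcont : Continuous φ) : ∃ A k : ℝ, 0 ≤ A ∧ ∀ y, k - A * ‖y‖ ≤ φ y := by
  set t : Set (E × ℝ) := {p | φ p.1 < p.2} with ht
  have ht_open : IsOpen t := isOpen_lt (hcont.comp continuous_fst) continuous_snd
  have ht_conv : Convex ℝ t := by
    intro p hp q hq a c haa hcc hac
    simp only [ht, Set.mem_setOf_eq] at hp hq ⊢
    have hfst : (a • p + c • q).1 = a • p.1 + c • q.1 := rfl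
    have hsnd : (a • p + c • q).2 = a * p.2 + c * q.2 := rfl
    rw [hfst, hsnd]
    have h1 : φ (a • p.1 + c • q.1) ≤ a * φ p.1 + c * φ q.1 :=
      hφ.2 (Set.mem_univ _) (Set.mem_univ _) haa hcc hac
    have h2 : a * φ p.1 + c * φ q.1 < a * p.2 + c * q.2 := by
      rcases lt_or_eq_of_le haa with hA | hA
      · have g1 : a * φ p.1 < a * p.2 := mul_lt_mul_of_pos_left hp hA
        have g2 : c * φ q.1 ≤ c * q.2 := mul_le_mul_of_nonneg_left hq.le hcc
        linarith
      · have hc1 : c = 1 := by linarith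
        rw [← hA, hc1]
        simpa using hq
    linarith
  have hpt : ((0 : E), φ 0 - 1) ∉ t := by
    simp only [ht, Set.mem_setOf_eq, not_lt]
    linarith
  obtain ⟨f, hf⟩ := geometric_hahn_banach_point_open ht_conv ht_open hpt
  set c' : ℝ := f (0, 1) with hc'def
  set K : ℝ := f (0, φ 0 - 1) with hK
  have hdecomp : ∀ (y : E) (s : ℝ), f (y, s) = f (y, 0) + s * c' := by
    intro y s
    have h1 : ((y, s) : E × ℝ) = (y, (0:ℝ)) + s • ((0:E), (1:ℝ)) := by
      simp [Prod.ext_iff]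
    rw [h1, map_add, f.map_smul]
    simp [smul_eq_mul, hc'def]
  have hc' : 0 < c' := by
    have h1 : ((0:E), φ 0 + 1) ∈ t := by
      simp only [ht, Set.mem_setOf_eq]; linarith
    have h2 := hf _ h1
    have hKd : K = f (0, 0) + (φ 0 - 1) * c' := hdecomp 0 (φ 0 - 1)
    rw [hdecomp] at h2
    nlinarith
  have hmin : ∀ y, K ≤ f (y, 0) + φ y * c' := by
    intro y
    by_contra hcon
    push_neg at hcon
    set ε : ℝ := (K - (f (y, 0) + φ y * c')) / (2 * c') with hε
    have hεpos : 0 < ε := by apply div_pos; linarith; linarith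
    have hmem : (y, φ y + ε) ∈ t := by
      simp only [ht, Set.mem_setOf_eq]; linarith
    have h2 := hf _ hmem
    rw [hdecomp] at h2
    have h3 : ε * c' = (K - (f (y, 0) + φ y * c')) / 2 := by
      rw [hε]; field_simp
    nlinarith
  refine ⟨‖f‖ / c', K / c', by positivity, fun y => ?_⟩
  have h4 : ‖f (y, 0)‖ ≤ ‖f‖ * ‖((y : E), (0:ℝ))‖ := f.le_opNorm _
  have h5 : ‖((y : E), (0:ℝ))‖ = ‖y‖ := by
    rw [Prod.norm_def]
    simp [norm_nonneg]
  rw [h5] at h4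
  have h6 : f (y, 0) ≤ ‖f‖ * ‖y‖ :=
    le_trans (le_abs_self _) (by rwa [Real.norm_eq_abs] at h4)
  have h7 : K - ‖f‖ * ‖y‖ ≤ φ y * c' := by linarith [hmin y]
  have h8 : K / c' - ‖f‖ / c' * ‖y‖ = (K - ‖f‖ * ‖y‖) / c' := by ring
  rw [h8]
  exact (div_le_iff₀ hc').mpr h7


set_option maxHeartbeats 1000000 in
/-- The Moreau–Yosida envelope construction: for `l > 0`, the function
`x ↦ inf_z (l φ(z) + ‖x-z‖²/2) - ‖x‖²/2` is an admissible Zolotarev potential. -/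
lemma moreau {φ : E → ℝ} (hφ : ConvexOn ℝ Set.univ φ) (hcont : Continuous φ)
    {A k : ℝ} (hA : 0 ≤ A) (hlow : ∀ y, k - A * ‖y‖ ≤ φ y)
    {l : ℝ} (hl : 0 < l) :
    ∃ (u : E → ℝ) (p : E → E),
      ZolAdmissible u ∧
      (∀ x z, u x + ‖x‖ ^ 2 / 2 ≤ l * φ z + ‖x - z‖ ^ 2 / 2) ∧
      (∀ x, u x + ‖x‖ ^ 2 / 2 = l * φ (p x) + ‖x - p x‖ ^ 2 / 2) := by
  classical
  set F : E → E → ℝ := fun x z => l * φ z + ‖x - z‖ ^ 2 / 2 with hF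
  have hFcont : ∀ x, Continuous (F x) := by
    intro x
    exact (continuous_const.mul hcont).add
      ((((continuous_const.sub continuous_id).norm.pow 2)).div_const 2)
  have hmin : ∀ x : E, ∃ z₀, ∀ z, F x z₀ ≤ F x z := by
    intro x
    apply (hFcont x).exists_forall_le
    set B : ℝ := l * A + ‖x‖ with hB
    set c2 : ℝ := l * k + ‖x‖ ^ 2 / 2 - B ^ 2 / 2 with hc2
    have hpt : ∀ z : E, (‖z‖ - B) ^ 2 / 2 + c2 ≤ F x z := by
      intro z
      have h1 : l * (k - A * ‖z‖) ≤ l * φ z := mul_le_mul_of_nonneg_left (hlow z) hl.le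
      have h2' : |‖z‖ - ‖x‖| ≤ ‖x - z‖ := by
        rw [norm_sub_rev]
        exact abs_norm_sub_norm_le z x
      have h2 : (‖z‖ - ‖x‖) ^ 2 ≤ ‖x - z‖ ^ 2 := by
        rw [← sq_abs]
        exact pow_le_pow_left₀ (abs_nonneg _) h2' 2
      have h3 : l * k - l * A * ‖z‖ + (‖z‖ - ‖x‖) ^ 2 / 2 = (‖z‖ - B) ^ 2 / 2 + c2 := by
        rw [hB, hc2]; ring
      have : l * (k - A * ‖z‖) = l * k - l * A * ‖z‖ := by ring
      simp only [hF]
      nlinarith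
    have htend : Tendsto (fun z : E => (‖z‖ - B) ^ 2 / 2 + c2) (cocompact E) atTop := by
      have h1 : Tendsto (fun t : ℝ => (t - B) ^ 2 / 2 + c2) atTop atTop := by
        apply tendsto_atTop_add_const_right
        apply Tendsto.atTop_div_const (by norm_num : (0:ℝ) < 2)
        exact (tendsto_pow_atTop two_ne_zero).comp (tendsto_atTop_add_const_right _ (-B) tendsto_id)
      exact h1.comp tendsto_norm_cocompact_atTop
    exact tendsto_atTop_mono hpt htend
  choose p hp using hmin
  -- variational inequality for the proximal point
  have hvar : ∀ x z, l * φ (p x) + ⟪x - p x, z - p x⟫ ≤ l * φ z := by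
    intro x z
    have hkey : ∀ t : ℝ, 0 < t → t ≤ 1 →
        ⟪x - p x, z - p x⟫ ≤ l * (φ z - φ (p x)) + t * ‖z - p x‖ ^ 2 / 2 := by
      intro t ht ht1
      have hw := hp x ((1 - t) • p x + t • z)
      have hφw : φ ((1 - t) • p x + t • z) ≤ (1 - t) * φ (p x) + t * φ z :=
        hφ.2 (Set.mem_univ _) (Set.mem_univ _) (by linarith) ht.le (by ring)
      have hnorm : ‖x - ((1 - t) • p x + t • z)‖ ^ 2
          = ‖x - p x‖ ^ 2 - 2 * (t * ⟪x - p x, z - p x⟫) + (t * ‖z - p x‖) ^ 2 := by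
        have hrw : x - ((1 - t) • p x + t • z) = (x - p x) - t • (z - p x) := by
          rw [smul_sub, sub_smul, one_smul]
          abel
        rw [hrw, norm_sub_sq_real, real_inner_smul_right, norm_smul]
        rw [Real.norm_eq_abs, abs_of_pos ht]
      simp only [hF] at hw
      rw [hnorm] at hw
      have h9 : 0 ≤ t * (l * (φ z - φ (p x)) - ⟪x - p x, z - p x⟫ + t * ‖z - p x‖ ^ 2 / 2) := by
        nlinarith [mul_le_mul_of_nonneg_left hφw hl.le]
      nlinarith
    by_contra hcon
    push_neg at hcon
    set δ : ℝ := l * φ (p x) + ⟪x - p x, z - p x⟫ - l * φ z with hδ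
    have hδpos : 0 < δ := by simp only [hδ]; linarith
    set S : ℝ := ‖z - p x‖ ^ 2 with hS
    have hSnn : 0 ≤ S := by positivity
    set t : ℝ := min 1 (δ / (S + 1)) with htdef
    have htpos : 0 < t := lt_min one_pos (div_pos hδpos (by positivity))
    have ht1 : t ≤ 1 := min_le_left _ _
    have hk := hkey t htpos ht1
    have h11 : t * S ≤ δ := by
      have h12 : t ≤ δ / (S + 1) := min_le_right _ _
      have h13 : t * S ≤ (δ / (S + 1)) * S := mul_le_mul_of_nonneg_right h12 hSnn
      have h14 : (δ / (S + 1)) * S ≤ δ := by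
        rw [div_mul_eq_mul_div, div_le_iff₀ (by positivity)]
        nlinarith
      linarith
    simp only [hδ] at hδpos
    nlinarith
  -- firm nonexpansiveness
  have hfirm : ∀ x y, ‖p x - p y‖ ^ 2 ≤ ⟪x - y, p x - p y⟫ := by
    intro x y
    have h1 := hvar x (p y)
    have h2 := hvar y (p x)
    have e1 : ⟪x - p x, p y - p x⟫ = -⟪x - p x, p x - p y⟫ := by
      rw [← inner_neg_right]
      congr 1
      abel
    rw [e1] at h1
    have e3 : ⟪x - y, p x - p y⟫ - ‖p x - p y‖ ^ 2
        = ⟪x - p x, p x - p y⟫ - ⟪y - p y, p x - p y⟫ := by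
      rw [← real_inner_self_eq_norm_sq]
      rw [← inner_sub_left, ← inner_sub_left]
      congr 1
      abel
    nlinarith [h1, h2, e3]
  have hlip : ∀ x y, ‖p x - p y‖ ≤ ‖x - y‖ := by
    intro x y
    have h1 := hfirm x y
    have h2 : ⟪x - y, p x - p y⟫ ≤ ‖x - y‖ * ‖p x - p y‖ := real_inner_le_norm _ _
    rcases eq_or_lt_of_le (norm_nonneg (p x - p y)) with h | h
    · rw [← h]; exact norm_nonneg _
    · nlinarith
  set e : E → ℝ := fun x => F x (p x) with he
  set u : E → ℝ := fun x => e x - ‖x‖ ^ 2 / 2 with hu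
  -- quadratic remainder bound for u
  have hquad : ∀ x y, |u y - u x - ⟪-p x, y - x⟫| ≤ ‖y - x‖ ^ 2 := by
    intro x y
    have hupper : e y - e x - ⟪x - p x, y - x⟫ ≤ ‖y - x‖ ^ 2 / 2 := by
      have h1 := hp y (p x)
      simp only [hF, he] at h1 ⊢
      have h2 : ‖y - p x‖ ^ 2 = ‖x - p x‖ ^ 2 + 2 * ⟪x - p x, y - x⟫ + ‖y - x‖ ^ 2 := by
        have hrw : y - p x = (x - p x) + (y - x) := by abel
        rw [hrw, @norm_add_sq_real]
        try ring
      nlinarith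
    have hlower : 0 ≤ e y - e x - ⟪x - p x, y - x⟫ := by
      have h1 := hvar x (p y)
      simp only [he, hF]
      have h2 : 0 ≤ ‖(y - p y) - (x - p x)‖ ^ 2 / 2 := by positivity
      have h3 : ‖(y - p y) - (x - p x)‖ ^ 2
          = ‖y - p y‖ ^ 2 - 2 * ⟪y - p y, x - p x⟫ + ‖x - p x‖ ^ 2 := by
        rw [@norm_sub_sq_real]
      have h4 : ⟪x - p x, p y - p x⟫ - ⟪x - p x, y - x⟫ = -⟪x - p x, (y - p y) - (x - p x)⟫ := by
        rw [← inner_neg_right, ← inner_sub_right]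
        congr 1
        abel
      have h5 : ⟪x - p x, (y - p y) - (x - p x)⟫
          = ⟪y - p y, x - p x⟫ - ‖x - p x‖ ^ 2 := by
        rw [inner_sub_right, real_inner_self_eq_norm_sq, real_inner_comm]
      nlinarith
    have hsq : ‖y‖ ^ 2 / 2 - ‖x‖ ^ 2 / 2 = ⟪x, y - x⟫ + ‖y - x‖ ^ 2 / 2 := by
      have hrw : y = x + (y - x) := by abel
      nth_rewrite 1 [hrw]
      rw [@norm_add_sq_real]
      ring
    have hru : u y - u x - ⟪-p x, y - x⟫
        = (e y - e x - ⟪x - p x, y - x⟫) - ‖y - x‖ ^ 2 / 2 := by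
      simp only [hu]
      rw [inner_neg_left, inner_sub_left]
      linarith [hsq]
    have hq : (0:ℝ) ≤ ‖y - x‖ ^ 2 := sq_nonneg _
    rw [hru, abs_le]
    constructor
    · clear_value u e F
      linarith
    · clear_value u e F
      linarith
  have hgrad : ∀ x, HasGradientAt u (-p x) x := by
    intro x
    exact hasGradientAt_of_quad zero_le_one (fun y => by simpa using hquad x y)
  have hadm : ZolAdmissible u := by
    constructor
    · exact fun x => (hgrad x).differentiableAt
    · have hgeq : (fun x => gradient u x) = fun x => -p x := funext fun x => (hgrad x).gradient
      rw [hgeq]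
      apply LipschitzWith.of_dist_le_mul
      intro x y
      simp only [dist_eq_norm, NNReal.coe_one, one_mul]
      have : -p x - -p y = -(p x - p y) := by abel
      rw [this, norm_neg]
      exact hlip x y
  refine ⟨u, p, hadm, ?_, ?_⟩
  · intro x z
    have h1 := hp x z
    simp only [hu, he]
    simpa using h1
  · intro x
    simp only [hu, he, hF]
    ring


set_option maxHeartbeats 1000000 in
/-- If every admissible gap is at most `(m₂ν - m₂μ)/2`, then `μ ≼_c ν`. -/
lemma convexOrder_of_gap_le {μ ν : Measure E} [IsProbabilityMeasure μ] [IsProbabilityMeasure ν]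
    (hμ2 : Integrable (fun x => ‖x‖ ^ 2) μ) (hν2 : Integrable (fun x => ‖x‖ ^ 2) ν)
    (hgap : ∀ u : E → ℝ, ZolAdmissible u →
      (∫ x, u x ∂μ) - ∫ x, u x ∂ν ≤ (m2 ν - m2 μ) / 2) :
    ConvexOrderLE μ ν := by
  intro φ hφ hφμ hφν
  have hcont : Continuous φ := by
    rw [← continuousOn_univ]
    exact hφ.continuousOn isOpen_univ
  obtain ⟨A, k, hA, hlow⟩ := exists_linear_minorant hφ hcont
  set l : ℕ → ℝ := fun n => 1 / (n + 1) with hldef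
  have hlpos : ∀ n, 0 < l n := fun n => by positivity
  have hconstr : ∀ n : ℕ, ∃ (u : E → ℝ) (p : E → E),
      ZolAdmissible u ∧
      (∀ x z, u x + ‖x‖ ^ 2 / 2 ≤ l n * φ z + ‖x - z‖ ^ 2 / 2) ∧
      (∀ x, u x + ‖x‖ ^ 2 / 2 = l n * φ (p x) + ‖x - p x‖ ^ 2 / 2) :=
    fun n => moreau hφ hcont hA hlow (hlpos n)
  choose U P hadm hkey1 hkey2 using hconstr
  have hinvl : ∀ n : ℕ, ((n : ℝ) + 1) * l n = 1 := by
    intro n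
    have : ((n : ℝ) + 1) ≠ 0 := by positivity
    simp only [hldef]; field_simp
  set g : ℕ → E → ℝ := fun n x => ((n : ℝ) + 1) * (U n x + ‖x‖ ^ 2 / 2) with hgdef
  -- pointwise facts
  have hgle : ∀ n x, g n x ≤ φ x := by
    intro n x
    have h1 := hkey1 n x x
    simp only [sub_self, norm_zero] at h1
    have h2 : ((n:ℝ) + 1) * (U n x + ‖x‖ ^ 2 / 2) ≤ ((n:ℝ) + 1) * (l n * φ x) := by
      apply mul_le_mul_of_nonneg_left _ (by positivity)
      simpa using h1
    calc g n x ≤ ((n:ℝ) + 1) * (l n * φ x) := h2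
      _ = (((n:ℝ) + 1) * l n) * φ x := by ring
      _ = φ x := by rw [hinvl n, one_mul]
  have hgmono : ∀ x, Monotone fun n => g n x := by
    intro x
    intro m n hmn
    simp only [hgdef]
    set q : ℝ := ‖x - P n x‖ ^ 2 with hq
    have hqnn : (0:ℝ) ≤ q := by positivity
    have h1 : U m x + ‖x‖ ^ 2 / 2 ≤ l m * φ (P n x) + q / 2 := hkey1 m x (P n x)
    have h2 : U n x + ‖x‖ ^ 2 / 2 = l n * φ (P n x) + q / 2 := hkey2 n x
    have hmn' : ((m:ℝ) + 1) ≤ ((n:ℝ) + 1) := by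
      have : (m:ℝ) ≤ n := Nat.cast_le.mpr hmn
      linarith
    calc ((m:ℝ) + 1) * (U m x + ‖x‖ ^ 2 / 2)
        ≤ ((m:ℝ) + 1) * (l m * φ (P n x) + q / 2) :=
          mul_le_mul_of_nonneg_left h1 (by positivity)
      _ = (((m:ℝ) + 1) * l m) * φ (P n x) + ((m:ℝ) + 1) * (q / 2) := by ring
      _ = φ (P n x) + ((m:ℝ) + 1) * (q / 2) := by rw [hinvl m, one_mul]
      _ ≤ φ (P n x) + ((n:ℝ) + 1) * (q / 2) := by
          have : ((m:ℝ) + 1) * (q / 2) ≤ ((n:ℝ) + 1) * (q / 2) :=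
            mul_le_mul_of_nonneg_right hmn' (by positivity)
          linarith
      _ = (((n:ℝ) + 1) * l n) * φ (P n x) + ((n:ℝ) + 1) * (q / 2) := by rw [hinvl n, one_mul]
      _ = ((n:ℝ) + 1) * (U n x + ‖x‖ ^ 2 / 2) := by rw [h2]; ring
  have hgtendsto : ∀ x, Tendsto (fun n => g n x) atTop (𝓝 (φ x)) := by
    intro x
    set r : ℕ → ℝ := fun n => ‖x - P n x‖ with hrdef
    set C : ℝ := φ x - k + A * ‖x‖ with hC
    have hCnn : 0 ≤ C := by
      have := hlow x
      simp only [hC]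
      nlinarith [norm_nonneg x]
    have hrbound : ∀ n, r n ^ 2 ≤ 4 * l n * C + 4 * (l n) ^ 2 * A ^ 2 := by
      intro n
      have h1 : l n * φ (P n x) + r n ^ 2 / 2 ≤ l n * φ x := by
        have := hkey1 n x x
        simp only [sub_self, norm_zero] at this
        have h2 := hkey2 n x
        simp only [hrdef]
        nlinarith [this, h2]
      have h3 : k - A * ‖P n x‖ ≤ φ (P n x) := hlow (P n x)
      have h4 : ‖P n x‖ ≤ ‖x‖ + r n := by
        have : ‖P n x‖ - ‖x‖ ≤ ‖P n x - x‖ := norm_sub_norm_le _ _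
        have h5 : ‖P n x - x‖ = r n := by rw [hrdef]; exact norm_sub_rev _ _
        linarith
      have h6 : φ (P n x) ≥ k - A * ‖x‖ - A * r n := by nlinarith
      have h7 : r n ^ 2 / 2 ≤ l n * (C + A * r n) := by
        have h8 : l n * φ (P n x) ≥ l n * (k - A * ‖x‖ - A * r n) :=
          mul_le_mul_of_nonneg_left h6 (hlpos n).le
        have h9 : l n * φ x - l n * (k - A * ‖x‖ - A * r n) = l n * (C + A * r n) := by
          rw [hC]; ring
        nlinarith
      nlinarith [sq_nonneg (r n - 2 * l n * A), (hlpos n).le]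
    have hβ : Tendsto (fun n => Real.sqrt (4 * l n * C + 4 * (l n) ^ 2 * A ^ 2)) atTop (𝓝 0) := by
      have hl0 : Tendsto l atTop (𝓝 0) := by
        rw [hldef]; exact tendsto_one_div_add_atTop_nhds_zero_nat
      have harg : Tendsto (fun n => 4 * l n * C + 4 * (l n) ^ 2 * A ^ 2) atTop (𝓝 0) := by
        have h1 : Tendsto (fun n => 4 * l n * C) atTop (𝓝 (4 * 0 * C)) :=
          (hl0.const_mul 4).mul_const C
        have h2 : Tendsto (fun n => 4 * (l n) ^ 2 * A ^ 2) atTop (𝓝 (4 * 0 ^ 2 * A ^ 2)) :=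
          (((hl0.pow 2).const_mul 4)).mul_const (A ^ 2)
        have := h1.add h2
        simpa using this
      have := (Real.continuous_sqrt.tendsto 0).comp harg
      simpa [Function.comp_def] using this
    have hr0 : Tendsto r atTop (𝓝 0) := by
      apply squeeze_zero (fun n => norm_nonneg _)
        (fun n => ?_) hβ
      have h1 := hrbound n
      have h2 : 0 ≤ r n := norm_nonneg _
      show r n ≤ Real.sqrt (4 * l n * C + 4 * (l n) ^ 2 * A ^ 2)
      rw [← Real.sqrt_sq h2]
      exact Real.sqrt_le_sqrt h1
    have hPx : Tendsto (fun n => P n x) atTop (𝓝 x) := by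
      rw [tendsto_iff_dist_tendsto_zero]
      have : ∀ n, dist (P n x) x = r n := by
        intro n
        rw [dist_eq_norm, hrdef]
        exact norm_sub_rev _ _
      simpa [this] using hr0
    have hφP : Tendsto (fun n => φ (P n x)) atTop (𝓝 (φ x)) :=
      (hcont.continuousAt.tendsto).comp hPx
    apply tendsto_of_tendsto_of_tendsto_of_le_of_le hφP tendsto_const_nhds
    · intro n
      show φ (P n x) ≤ g n x
      have h2 := hkey2 n x
      have h3 : g n x = (((n:ℝ) + 1) * l n) * φ (P n x) + ((n:ℝ)+1) * (‖x - P n x‖ ^ 2 / 2) := by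
        simp only [hgdef]
        rw [h2]; ring
      rw [h3, hinvl n, one_mul]
      have : 0 ≤ ((n:ℝ)+1) * (‖x - P n x‖ ^ 2 / 2) := by positivity
      linarith
    · exact fun n => hgle n x
  -- integral inequality for each n
  have hgint : ∀ (ρ : Measure E) [IsProbabilityMeasure ρ], Integrable (fun x => ‖x‖ ^ 2) ρ →
      ∀ n, Integrable (g n) ρ := by
    intro ρ _ hρ2 n
    exact ((admissible_integrable (hadm n).1 (hadm n).2 hρ2).add (hρ2.div_const 2)).const_mul _
  have hgle_int : ∀ n, ∫ x, g n x ∂μ ≤ ∫ x, g n x ∂ν := by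
    intro n
    have h1 := hgap (U n) (hadm n)
    have h2 : ∫ x, (U n x + ‖x‖ ^ 2 / 2) ∂μ ≤ ∫ x, (U n x + ‖x‖ ^ 2 / 2) ∂ν := by
      rw [integral_add (admissible_integrable (hadm n).1 (hadm n).2 hμ2) (hμ2.div_const 2),
        integral_add (admissible_integrable (hadm n).1 (hadm n).2 hν2) (hν2.div_const 2),
        integral_div, integral_div]
      have hm2μ : ∫ x, ‖x‖ ^ 2 ∂μ = m2 μ := rfl
      have hm2ν : ∫ x, ‖x‖ ^ 2 ∂ν = m2 ν := rfl
      rw [hm2μ, hm2ν]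
      linarith
    calc ∫ x, g n x ∂μ = ((n:ℝ)+1) * ∫ x, (U n x + ‖x‖ ^ 2 / 2) ∂μ := by
          simp only [hgdef]
          rw [integral_const_mul]
      _ ≤ ((n:ℝ)+1) * ∫ x, (U n x + ‖x‖ ^ 2 / 2) ∂ν := by
          apply mul_le_mul_of_nonneg_left h2 (by positivity)
      _ = ∫ x, g n x ∂ν := by
          simp only [hgdef]
          rw [integral_const_mul]
  -- monotone convergence
  have hμlim : Tendsto (fun n => ∫ x, g n x ∂μ) atTop (𝓝 (∫ x, φ x ∂μ)) :=
    integral_tendsto_of_tendsto_of_monotone (fun n => hgint μ hμ2 n) hφμ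
      (Filter.Eventually.of_forall hgmono) (Filter.Eventually.of_forall hgtendsto)
  have hνlim : Tendsto (fun n => ∫ x, g n x ∂ν) atTop (𝓝 (∫ x, φ x ∂ν)) :=
    integral_tendsto_of_tendsto_of_monotone (fun n => hgint ν hν2 n) hφν
      (Filter.Eventually.of_forall hgmono) (Filter.Eventually.of_forall hgtendsto)
  exact le_of_tendsto_of_tendsto' hμlim hνlim hgle_int

theorem stmt_13
    {d : ℕ} (b : EuclideanSpace ℝ (Fin d)) (μ ν : Measure (EuclideanSpace ℝ (Fin d)))
    [IsProbabilityMeasure μ] [IsProbabilityMeasure ν]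
    (hμ2 : Integrable (fun x => ‖x‖ ^ 2) μ) (hν2 : Integrable (fun x => ‖x‖ ^ 2) ν)
    (hμb : bary μ = b) (hνb : bary ν = b) :
    (ConvexOrderLE μ ν ↔ Z2 μ ν = (m2 ν - m2 μ) / 2) ∧
    (ConvexOrderLE μ ν ↔
      (ZolAdmissible (fun x : EuclideanSpace ℝ (Fin d) => -(‖x‖ ^ 2) / 2) ∧
       (∫ x, -(‖x‖ ^ 2) / 2 ∂μ) - (∫ x, -(‖x‖ ^ 2) / 2 ∂ν) = Z2 μ ν)) := by
  set S : Set ℝ := {r : ℝ | ∃ u : EuclideanSpace ℝ (Fin d) → ℝ, ZolAdmissible u ∧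
    r = (∫ x, u x ∂μ) - ∫ x, u x ∂ν} with hS
  have hZdef : Z2 μ ν = sSup S := rfl
  have hmem : (m2 ν - m2 μ) / 2 ∈ S :=
    ⟨fun x => -(‖x‖ ^ 2) / 2, zolAdmissible_u0, (u0_gap hμ2 hν2).symm⟩
  have hbdd : BddAbove S := by
    refine ⟨m2 μ + m2 ν, ?_⟩
    rintro r ⟨u, hu, rfl⟩
    exact gap_le_bound hμ2 hν2 hμb hνb hu
  have key : ConvexOrderLE μ ν ↔ Z2 μ ν = (m2 ν - m2 μ) / 2 := by
    constructor
    · intro hco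
      have hub : ∀ r ∈ S, r ≤ (m2 ν - m2 μ) / 2 := by
        rintro r ⟨u, hu, rfl⟩
        exact gap_le_of_convexOrder hμ2 hν2 hco hu
      rw [hZdef]
      exact le_antisymm (csSup_le ⟨_, hmem⟩ hub) (le_csSup ⟨(m2 ν - m2 μ) / 2, hub⟩ hmem)
    · intro hZ
      apply convexOrder_of_gap_le hμ2 hν2
      intro u hu
      have hmemu : (∫ x, u x ∂μ) - ∫ x, u x ∂ν ∈ S := ⟨u, hu, rfl⟩
      calc (∫ x, u x ∂μ) - ∫ x, u x ∂ν ≤ sSup S := le_csSup hbdd hmemu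
        _ = (m2 ν - m2 μ) / 2 := by rw [← hZdef, hZ]
  refine ⟨key, ?_, ?_⟩
  · intro hco
    refine ⟨zolAdmissible_u0, ?_⟩
    rw [u0_gap hμ2 hν2, key.mp hco]
  · rintro ⟨-, heq⟩
    apply key.mpr
    rw [← heq, u0_gap hμ2 hν2]


end
end

section
/- Let b ∈ ℝ^d and let μ, ν be Borel probability measures on ℝ^d with finite second moments and common barycentre [μ] = [ν] = b. Then μ ≼_c ν if and only if 𝒞(μ,ν) = m₂(ν). Moreover, if μ ≼_c ν, then ν is the unique minimizer of the problem defining 𝒞(μ,ν): every Borel probability measure ρ with finite second moment, ρ ≽_c μ, ρ ≽_c ν and m₂(ρ) = 𝒞(μ,ν) equals ν. -/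
open MeasureTheory Filter Topology
open scoped ENNReal RealInnerProductSpace Classical

noncomputable section

open scoped NNReal

namespace Aux14

variable {d : ℕ}

local notation "E" => EuclideanSpace ℝ (Fin d)

lemma integrable_norm_of_sq {ρ : Measure E} [IsProbabilityMeasure ρ]
    (h : Integrable (fun x : E => ‖x‖ ^ 2) ρ) : Integrable (fun x : E => ‖x‖) ρ := by
  refine ((integrable_const (1 : ℝ)).add h).mono' continuous_norm.aestronglyMeasurable ?_
  filter_upwards with x
  rw [norm_norm]
  have h1 : (0:ℝ) ≤ ‖x‖ := norm_nonneg x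
  have h2 : (0:ℝ) ≤ (‖x‖ - 1)^2 := sq_nonneg _
  simp only [Pi.add_apply]
  nlinarith

lemma integrable_id_of_sq {ρ : Measure E} [IsProbabilityMeasure ρ]
    (h : Integrable (fun x : E => ‖x‖ ^ 2) ρ) : Integrable (fun x : E => x) ρ := by
  exact (integrable_norm_iff aestronglyMeasurable_id).mp (integrable_norm_of_sq h)

lemma lipschitzWith.integrable {ρ : Measure E} [IsProbabilityMeasure ρ]
    (h1 : Integrable (fun x : E => ‖x‖) ρ) {g : E → ℝ} {K : ℝ≥0} (hg : LipschitzWith K g) :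
    Integrable g ρ := by
  refine ((integrable_const |g 0|).add (h1.const_mul (K : ℝ))).mono'
    hg.continuous.aestronglyMeasurable ?_
  filter_upwards with x
  have := hg.dist_le_mul x 0
  rw [Real.dist_eq, dist_eq_norm, sub_zero] at this
  rw [Real.norm_eq_abs]
  calc |g x| ≤ |g x - g 0| + |g 0| := by
        have := abs_sub_abs_le_abs_sub (g x) (g 0); have := abs_add_le (g x - g 0) (g 0)
        simpa using (by simpa using abs_add_le (g x - g 0) (g 0) : |g x| ≤ |g x - g 0| + |g 0|)
    _ ≤ |g 0| + (K : ℝ) * ‖x‖ := by rw [add_comm]; exact add_le_add le_rfl this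

lemma convexOn_norm_sq : ConvexOn ℝ Set.univ (fun x : E => ‖x‖ ^ 2) := by
  refine ⟨convex_univ, ?_⟩
  intro x _ y _ a b ha hb hab
  simp only [smul_eq_mul]
  have h1 : ‖a • x + b • y‖ ≤ a * ‖x‖ + b * ‖y‖ := by
    refine (norm_add_le _ _).trans ?_
    rw [norm_smul, norm_smul, Real.norm_eq_abs, Real.norm_eq_abs, abs_of_nonneg ha,
      abs_of_nonneg hb]
  have h2 : ‖a • x + b • y‖ ^ 2 ≤ (a * ‖x‖ + b * ‖y‖) ^ 2 := by
    have := norm_nonneg (a • x + b • y)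
    nlinarith
  have h3 : (a * ‖x‖ + b * ‖y‖) ^ 2 ≤ a * ‖x‖ ^ 2 + b * ‖y‖ ^ 2 := by
    nlinarith [mul_nonneg ha hb, sq_nonneg (‖x‖ - ‖y‖)]
  linarith


lemma continuous_of_convexOn {φ : E → ℝ} (hφ : ConvexOn ℝ Set.univ φ) : Continuous φ := by
  have := hφ.continuousOn isOpen_univ
  rwa [← continuousOn_univ]

lemma exists_affine_minorant {φ : E → ℝ} (hφ : ConvexOn ℝ Set.univ φ) :
    ∃ (a : EuclideanSpace ℝ (Fin d) →L[ℝ] ℝ) (c : ℝ), ∀ x, a x + c ≤ φ x := by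
  have hcont : Continuous φ := continuous_of_convexOn hφ
  set S : Set (E × ℝ) := {p | φ p.1 < p.2} with hS
  have hSo : IsOpen S := isOpen_lt (hcont.comp continuous_fst) continuous_snd
  have hSc : Convex ℝ S := by
    intro p hp q hq a b ha hb hab
    simp only [hS, Set.mem_setOf_eq] at hp hq ⊢
    have h1 : φ (a • p.1 + b • q.1) ≤ a * φ p.1 + b * φ q.1 :=
      hφ.2 (Set.mem_univ _) (Set.mem_univ _) ha hb hab
    have h2 : a * φ p.1 + b * φ q.1 < a * p.2 + b * q.2 := by
      rcases lt_or_eq_of_le ha with h | h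
      · exact add_lt_add_of_lt_of_le ((mul_lt_mul_iff_right₀ h).2 hp)
          (mul_le_mul_of_nonneg_left hq.le hb)
      · rw [← h] at hab ⊢
        simp only [zero_mul, zero_add] at *
        rw [hab]; simpa using hq
    have h3 : (a • p + b • q).1 = a • p.1 + b • q.1 := rfl
    have h4 : (a • p + b • q).2 = a * p.2 + b * q.2 := rfl
    rw [h3, h4]
    calc φ (a • p.1 + b • q.1) ≤ a * φ p.1 + b * φ q.1 := h1
      _ < _ := h2
  have hx : ((0 : E), φ 0 - 1) ∉ S := by simp [hS]
  obtain ⟨f, hf⟩ := geometric_hahn_banach_point_open hSc hSo hx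
  set β : ℝ := f ((0 : E), (1 : ℝ)) with hβ
  have hdecomp : ∀ (y : E) (r : ℝ), f (y, r) = f (y, 0) + r * β := by
    intro y r
    have h : (y, r) = (y, (0:ℝ)) + r • ((0:E), (1:ℝ)) := by
      simp [Prod.ext_iff]
    rw [h, f.map_add, f.map_smul, smul_eq_mul, hβ]
  have hβpos : 0 < β := by
    have h1 := hf ((0:E), φ 0 + 1) (by simp [hS])
    rw [hdecomp 0 (φ 0 + 1)] at h1
    rw [hdecomp 0 (φ 0 - 1)] at h1
    nlinarith
  refine ⟨(-β⁻¹) • (f.comp (ContinuousLinearMap.inl ℝ E ℝ)),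
    β⁻¹ * (f ((0:E), φ 0 - 1)), ?_⟩
  intro y
  have key : f ((0:E), φ 0 - 1) ≤ f (y, 0) + φ y * β := by
    by_contra hlt
    push_neg at hlt
    set tt := (f ((0:E), φ 0 - 1) - f (y,0)) / β with htt_def
    have htt : φ y < tt := by
      rw [lt_div_iff₀ hβpos]; linarith
    have h5 := hf (y, tt) (by simpa [hS] using htt)
    rw [hdecomp y tt] at h5
    have h6 : tt * β = f ((0:E), φ 0 - 1) - f (y,0) := by
      rw [htt_def, div_mul_cancel₀ _ (ne_of_gt hβpos)]
    linarith
  have hββ : β⁻¹ * β = 1 := inv_mul_cancel₀ (ne_of_gt hβpos)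
  simp only [ContinuousLinearMap.smul_apply, ContinuousLinearMap.comp_apply,
    ContinuousLinearMap.inl_apply, smul_eq_mul]
  have h7 : β⁻¹ * f ((0:E), φ 0 - 1) ≤ β⁻¹ * (f (y,0) + φ y * β) :=
    mul_le_mul_of_nonneg_left key (inv_pos.2 hβpos).le
  have h8 : β⁻¹ * (f (y,0) + φ y * β) = β⁻¹ * f (y,0) + φ y := by
    field_simp
  linarith


lemma moreau_bound {ν ρ : Measure (EuclideanSpace ℝ (Fin d))}
    [IsProbabilityMeasure ν] [IsProbabilityMeasure ρ]
    (hν2 : Integrable (fun x : E => ‖x‖ ^ 2) ν) (hρ2 : Integrable (fun x : E => ‖x‖ ^ 2) ρ)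
    (hle : ConvexOrderLE ν ρ) {g : EuclideanSpace ℝ (Fin d) → ℝ}
    (hgL : LipschitzWith L g) {t : ℝ} (ht : 0 < t) :
    ∫ x, g x ∂ρ ≤ (∫ x, g x ∂ν) + t / 2 * (m2 ρ - m2 ν) + (L : ℝ) ^ 2 / (2 * t) := by
  classical
  set CL : ℝ := (L : ℝ) ^ 2 / (2 * t) with hCL_def
  set gt : E → ℝ := fun x => ⨅ y : E, (g y + t / 2 * ‖x - y‖ ^ 2) with hgt_def
  have hglip : ∀ x y : E, g x - (L : ℝ) * ‖x - y‖ ≤ g y := by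
    intro x y
    have h := hgL.dist_le_mul x y
    rw [Real.dist_eq, dist_eq_norm] at h
    linarith [(abs_le.1 h).2]
  have hkey : ∀ x y : E, g x - CL ≤ g y + t / 2 * ‖x - y‖ ^ 2 := by
    intro x y
    have h1 := hglip x y
    have h2 : (L : ℝ) * ‖x - y‖ ≤ t / 2 * ‖x - y‖ ^ 2 + CL := by
      have hLsq : CL * (2 * t) = (L : ℝ) ^ 2 := by
        rw [hCL_def]; field_simp
      nlinarith [sq_nonneg (t * ‖x - y‖ - (L : ℝ)), ht, hLsq]
    linarith
  have hbdd : ∀ x : E, BddBelow (Set.range fun y : E => g y + t / 2 * ‖x - y‖ ^ 2) := by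
    intro x
    exact ⟨g x - CL, by rintro _ ⟨y, rfl⟩; exact hkey x y⟩
  have hgt_le : ∀ x : E, gt x ≤ g x := by
    intro x
    have h := ciInf_le (hbdd x) x
    simpa using h
  have hgt_ge : ∀ x : E, g x - CL ≤ gt x := fun x => le_ciInf fun y => hkey x y
  have honeside : ∀ u v : E, gt u - gt v ≤ (L : ℝ) * ‖u - v‖ := by
    intro u v
    have hstep : ∀ y : E, gt u - (L : ℝ) * ‖u - v‖ ≤ g y + t / 2 * ‖v - y‖ ^ 2 := by
      intro y
      have h1 : gt u ≤ g (y + u - v) + t / 2 * ‖u - (y + u - v)‖ ^ 2 := ciInf_le (hbdd u) _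
      have h2 : u - (y + u - v) = v - y := by abel
      rw [h2] at h1
      have h3 : (y + u - v) - y = u - v := by abel
      have h4 := hglip (y + u - v) y
      rw [h3] at h4
      linarith
    have h5 : gt u - (L : ℝ) * ‖u - v‖ ≤ gt v := le_ciInf hstep
    linarith
  have hgt_lip : LipschitzWith L gt := by
    refine LipschitzWith.of_dist_le_mul fun u v => ?_
    rw [Real.dist_eq, dist_eq_norm, abs_sub_le_iff]
    constructor
    · exact honeside u v
    · have := honeside v u
      rwa [norm_sub_rev] at this
  have hconv : ConvexOn ℝ Set.univ (fun x : E => t / 2 * ‖x‖ ^ 2 - gt x) := by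
    refine ⟨convex_univ, ?_⟩
    intro x _ z _ a b ha hb hab
    simp only [smul_eq_mul]
    have hb1 : b = 1 - a := by linarith
    subst hb1
    have hm : t / 2 * ‖a • x + (1 - a) • z‖ ^ 2
        - (a * (t / 2 * ‖x‖ ^ 2 - gt x) + (1 - a) * (t / 2 * ‖z‖ ^ 2 - gt z)) ≤ gt (a • x + (1 - a) • z) := by
      refine le_ciInf fun y => ?_
      have key : ∀ w : E, t / 2 * ‖w‖ ^ 2 - (g y + t / 2 * ‖w - y‖ ^ 2)
          = t * ⟪w, y⟫ - t / 2 * ‖y‖ ^ 2 - g y := by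
        intro w
        rw [@norm_sub_sq_real]
        ring
      have hx' : t * ⟪x, y⟫ - t / 2 * ‖y‖ ^ 2 - g y ≤ t / 2 * ‖x‖ ^ 2 - gt x := by
        have h1 : gt x ≤ g y + t / 2 * ‖x - y‖ ^ 2 := ciInf_le (hbdd x) y
        linarith [key x]
      have hz' : t * ⟪z, y⟫ - t / 2 * ‖y‖ ^ 2 - g y ≤ t / 2 * ‖z‖ ^ 2 - gt z := by
        have h1 : gt z ≤ g y + t / 2 * ‖z - y‖ ^ 2 := ciInf_le (hbdd z) y
        linarith [key z]
      have hinner : ⟪a • x + (1 - a) • z, y⟫ = a * ⟪x, y⟫ + (1 - a) * ⟪z, y⟫ := by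
        rw [inner_add_left, real_inner_smul_left, real_inner_smul_left]
      have hkm := key (a • x + (1 - a) • z)
      rw [hinner] at hkm
      have hax := mul_le_mul_of_nonneg_left hx' ha
      have hbz := mul_le_mul_of_nonneg_left hz' hb
      linarith [hax, hbz, hkm]
    linarith
  have hn1ν : Integrable (fun x : E => ‖x‖) ν := integrable_norm_of_sq hν2
  have hn1ρ : Integrable (fun x : E => ‖x‖) ρ := integrable_norm_of_sq hρ2
  have hgtν : Integrable gt ν := lipschitzWith.integrable hn1ν hgt_lip
  have hgtρ : Integrable gt ρ := lipschitzWith.integrable hn1ρ hgt_lip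
  have hgν : Integrable g ν := lipschitzWith.integrable hn1ν hgL
  have hgρ : Integrable g ρ := lipschitzWith.integrable hn1ρ hgL
  have hintν : Integrable (fun x : E => t / 2 * ‖x‖ ^ 2 - gt x) ν := (hν2.const_mul (t / 2)).sub hgtν
  have hintρ : Integrable (fun x : E => t / 2 * ‖x‖ ^ 2 - gt x) ρ := (hρ2.const_mul (t / 2)).sub hgtρ
  have hh := hle (fun x : E => t / 2 * ‖x‖ ^ 2 - gt x) hconv hintν hintρ
  rw [integral_sub (hν2.const_mul (t / 2)) hgtν, integral_sub (hρ2.const_mul (t / 2)) hgtρ,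
    integral_const_mul, integral_const_mul] at hh
  have e1 : ∫ x, g x ∂ρ ≤ (∫ x, gt x ∂ρ) + CL := by
    have h1 : ∫ x, g x ∂ρ ≤ ∫ x, (gt x + CL) ∂ρ := by
      refine integral_mono hgρ (hgtρ.add (integrable_const _)) fun x => ?_
      have := hgt_ge x
      simp only [Pi.add_apply]
      linarith
    rwa [integral_add hgtρ (integrable_const _), integral_const, probReal_univ,
      one_smul] at h1
  have e2 : ∫ x, gt x ∂ν ≤ ∫ x, g x ∂ν := integral_mono hgtν hgν fun x => hgt_le x
  have hm2ν : m2 ν = ∫ x, ‖x‖ ^ 2 ∂ν := rfl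
  have hm2ρ : m2 ρ = ∫ x, ‖x‖ ^ 2 ∂ρ := rfl
  rw [hm2ν, hm2ρ]
  linarith


/-- Lipschitz inf-convolution regularisation. -/
def infConv (φ : EuclideanSpace ℝ (Fin d) → ℝ) (k : ℝ) (x : EuclideanSpace ℝ (Fin d)) : ℝ :=
  ⨅ y : EuclideanSpace ℝ (Fin d), (φ y + k * ‖x - y‖)

section InfConv

variable {φ : EuclideanSpace ℝ (Fin d) → ℝ} {a : EuclideanSpace ℝ (Fin d) →L[ℝ] ℝ} {c : ℝ} {k : ℝ}

lemma infConv_lb (hac : ∀ x, a x + c ≤ φ x) (hk : ‖a‖ ≤ k) (x y : E) :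
    a x + c ≤ φ y + k * ‖x - y‖ := by
  have h1 : a y + c ≤ φ y := hac y
  have h2 : |a (y - x)| ≤ ‖a‖ * ‖y - x‖ := a.le_opNorm (y - x)
  have h3 : a y = a x + a (y - x) := by rw [← a.map_add]; congr 1; abel
  have h4 : ‖y - x‖ = ‖x - y‖ := norm_sub_rev _ _
  have h5 : -(‖a‖ * ‖x - y‖) ≤ a (y - x) := by
    rw [← h4]; linarith [(abs_le.1 h2).1]
  have h6 : ‖a‖ * ‖x - y‖ ≤ k * ‖x - y‖ := mul_le_mul_of_nonneg_right hk (norm_nonneg _)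
  linarith

lemma infConv_bddBelow (hac : ∀ x, a x + c ≤ φ x) (hk : ‖a‖ ≤ k) (x : E) :
    BddBelow (Set.range fun y : E => φ y + k * ‖x - y‖) :=
  ⟨a x + c, by rintro _ ⟨y, rfl⟩; exact infConv_lb hac hk x y⟩

lemma infConv_ge (hac : ∀ x, a x + c ≤ φ x) (hk : ‖a‖ ≤ k) (x : E) :
    a x + c ≤ infConv φ k x :=
  le_ciInf fun y => infConv_lb hac hk x y

lemma infConv_le (hac : ∀ x, a x + c ≤ φ x) (hk : ‖a‖ ≤ k) (x : E) :
    infConv φ k x ≤ φ x := by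
  have h := ciInf_le (infConv_bddBelow hac hk x) x
  simpa [infConv] using h

lemma infConv_convexOn (hφ : ConvexOn ℝ Set.univ φ) (hac : ∀ x, a x + c ≤ φ x)
    (hk : ‖a‖ ≤ k) (hk0 : 0 ≤ k) : ConvexOn ℝ Set.univ (infConv φ k) := by
  refine ⟨convex_univ, ?_⟩
  intro x _ z _ s b hs hb hsb
  have hb1 : b = 1 - s := by linarith
  subst hb1
  simp only [smul_eq_mul]
  refine le_of_forall_pos_le_add fun ε hε => ?_
  have hx : infConv φ k x < infConv φ k x + ε := by linarith
  have hz : infConv φ k z < infConv φ k z + ε := by linarith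
  obtain ⟨y₁, hy₁⟩ := exists_lt_of_ciInf_lt hx
  obtain ⟨y₂, hy₂⟩ := exists_lt_of_ciInf_lt hz
  have hmem : infConv φ k (s • x + (1 - s) • z)
      ≤ φ (s • y₁ + (1 - s) • y₂) + k * ‖(s • x + (1 - s) • z) - (s • y₁ + (1 - s) • y₂)‖ :=
    ciInf_le (infConv_bddBelow hac hk _) _
  have hφc : φ (s • y₁ + (1 - s) • y₂) ≤ s * φ y₁ + (1 - s) * φ y₂ :=
    hφ.2 (Set.mem_univ _) (Set.mem_univ _) hs hb hsb
  have hnorm : ‖(s • x + (1 - s) • z) - (s • y₁ + (1 - s) • y₂)‖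
      ≤ s * ‖x - y₁‖ + (1 - s) * ‖z - y₂‖ := by
    have h1 : (s • x + (1 - s) • z) - (s • y₁ + (1 - s) • y₂)
        = s • (x - y₁) + (1 - s) • (z - y₂) := by
      rw [smul_sub, smul_sub]; abel
    rw [h1]
    refine (norm_add_le _ _).trans ?_
    rw [norm_smul, norm_smul, Real.norm_eq_abs, Real.norm_eq_abs, abs_of_nonneg hs,
      abs_of_nonneg hb]
  have hka : k * ‖(s • x + (1 - s) • z) - (s • y₁ + (1 - s) • y₂)‖
      ≤ k * (s * ‖x - y₁‖ + (1 - s) * ‖z - y₂‖) := mul_le_mul_of_nonneg_left hnorm hk0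
  have e1 : s * (φ y₁ + k * ‖x - y₁‖) ≤ s * (infConv φ k x + ε) :=
    mul_le_mul_of_nonneg_left hy₁.le hs
  have e2 : (1 - s) * (φ y₂ + k * ‖z - y₂‖) ≤ (1 - s) * (infConv φ k z + ε) :=
    mul_le_mul_of_nonneg_left hy₂.le hb
  nlinarith [hmem, hφc, hka, e1, e2]

lemma infConv_lipschitz (hac : ∀ x, a x + c ≤ φ x) (hk : ‖a‖ ≤ k) :
    LipschitzWith (Real.toNNReal k) (infConv φ k) := by
  have hk0 : 0 ≤ k := (norm_nonneg a).trans hk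
  have honeside : ∀ u v : E, infConv φ k u - infConv φ k v ≤ k * ‖u - v‖ := by
    intro u v
    have hstep : ∀ y : E, infConv φ k u - k * ‖u - v‖ ≤ φ y + k * ‖v - y‖ := by
      intro y
      have h1 : infConv φ k u ≤ φ y + k * ‖u - y‖ := ciInf_le (infConv_bddBelow hac hk u) y
      have h2 : ‖u - y‖ ≤ ‖u - v‖ + ‖v - y‖ := by
        have := norm_add_le (u - v) (v - y)
        simpa [sub_add_sub_cancel] using this
      nlinarith [mul_le_mul_of_nonneg_left h2 hk0]
    have h5 : infConv φ k u - k * ‖u - v‖ ≤ infConv φ k v := le_ciInf hstep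
    linarith
  refine LipschitzWith.of_dist_le_mul fun u v => ?_
  rw [Real.dist_eq, dist_eq_norm, abs_sub_le_iff, Real.coe_toNNReal k hk0]
  refine ⟨honeside u v, ?_⟩
  have := honeside v u
  rwa [norm_sub_rev] at this

lemma infConv_tendsto (hφ : ConvexOn ℝ Set.univ φ) (hac : ∀ x, a x + c ≤ φ x) (x : E)
    {ε : ℝ} (hε : 0 < ε) :
    ∃ K : ℝ, ‖a‖ ≤ K ∧ ∀ k, K ≤ k → φ x - ε ≤ infConv φ k x := by
  have hcont : Continuous φ := continuous_of_convexOn hφ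
  have hx : ContinuousAt φ x := hcont.continuousAt
  obtain ⟨δ, hδ0, hδ⟩ := Metric.continuousAt_iff.1 hx ε hε
  have hφax : 0 ≤ φ x - (a x + c) := by linarith [hac x]
  refine ⟨‖a‖ + (φ x - (a x + c)) / (δ / 2), le_add_of_nonneg_right (by positivity), ?_⟩
  intro k hkK
  have hk : ‖a‖ ≤ k := le_trans (le_add_of_nonneg_right (by positivity)) hkK
  refine le_ciInf fun y => ?_
  by_cases hcase : ‖x - y‖ < δ
  · have hdist : dist y x < δ := by
      rw [dist_eq_norm, norm_sub_rev]; exact hcase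
    have := hδ hdist
    rw [Real.dist_eq] at this
    have h1 := (abs_lt.1 this).1
    have hk0 : 0 ≤ k := (norm_nonneg a).trans hk
    nlinarith [norm_nonneg (x - y), mul_nonneg hk0 (norm_nonneg (x - y))]
  · push_neg at hcase
    have h1 : a x + c + (k - ‖a‖) * ‖x - y‖ ≤ φ y + k * ‖x - y‖ := by
      have := infConv_lb hac (le_refl ‖a‖) x y
      nlinarith [mul_le_mul_of_nonneg_right (sub_nonneg.2 hk : (0:ℝ) ≤ k - ‖a‖) (norm_nonneg (x - y))]
    have h2 : (φ x - (a x + c)) / (δ / 2) * (δ / 2) = φ x - (a x + c) := by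
      field_simp
    have h3 : φ x - (a x + c) ≤ (k - ‖a‖) * ‖x - y‖ := by
      have hd2 : δ / 2 ≤ ‖x - y‖ := by linarith
      have hkk : (φ x - (a x + c)) / (δ / 2) ≤ k - ‖a‖ := by linarith
      have hdivnn : (0:ℝ) ≤ (φ x - (a x + c)) / (δ / 2) := div_nonneg hφax (by positivity)
      have h4 := mul_le_mul hkk hd2 (by positivity) (le_trans hdivnn hkk)
      rw [h2] at h4
      exact h4
    linarith

end InfConv


section Conv

lemma integrable_fst_sq {μ₁ μ₂ : Measure (EuclideanSpace ℝ (Fin d))}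
    [IsProbabilityMeasure μ₁] [IsProbabilityMeasure μ₂]
    (h₁ : Integrable (fun x : E => ‖x‖ ^ 2) μ₁) :
    Integrable (fun p : E × E => ‖p.1‖ ^ 2) (μ₁.prod μ₂) := by
  have hmap : Measure.map Prod.fst (μ₁.prod μ₂) = μ₁ := by
    rw [Measure.map_fst_prod]; simp
  exact Integrable.comp_measurable (by rwa [hmap]) measurable_fst

lemma integrable_snd_sq {μ₁ μ₂ : Measure (EuclideanSpace ℝ (Fin d))}
    [IsProbabilityMeasure μ₁] [IsProbabilityMeasure μ₂]
    (h₂ : Integrable (fun x : E => ‖x‖ ^ 2) μ₂) :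
    Integrable (fun p : E × E => ‖p.2‖ ^ 2) (μ₁.prod μ₂) := by
  have hmap : Measure.map Prod.snd (μ₁.prod μ₂) = μ₂ := by
    rw [Measure.map_snd_prod]; simp
  exact Integrable.comp_measurable (by rwa [hmap]) measurable_snd

lemma integrable_sq_conv (b : EuclideanSpace ℝ (Fin d))
    {μ₁ μ₂ : Measure (EuclideanSpace ℝ (Fin d))}
    [IsProbabilityMeasure μ₁] [IsProbabilityMeasure μ₂]
    (h₁ : Integrable (fun x : E => ‖x‖ ^ 2) μ₁) (h₂ : Integrable (fun x : E => ‖x‖ ^ 2) μ₂) :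
    Integrable (fun x : E => ‖x‖ ^ 2) ((μ₁.prod μ₂).map (fun p : E × E => p.1 + p.2 - b)) := by
  have hT : Continuous (fun p : E × E => p.1 + p.2 - b) := by fun_prop
  rw [integrable_map_measure (g := fun x : E => ‖x‖ ^ 2) (continuous_norm.pow 2).aestronglyMeasurable hT.aemeasurable]
  have hbound : ∀ p : E × E, ‖‖p.1 + p.2 - b‖ ^ 2‖
      ≤ 3 * ‖p.1‖ ^ 2 + 3 * ‖p.2‖ ^ 2 + 3 * ‖b‖ ^ 2 := by
    intro p
    rw [Real.norm_eq_abs, abs_of_nonneg (by positivity)]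
    have h3 : ‖p.1 + p.2 - b‖ ≤ ‖p.1‖ + ‖p.2‖ + ‖b‖ := by
      calc ‖p.1 + p.2 - b‖ ≤ ‖p.1 + p.2‖ + ‖b‖ := norm_sub_le _ _
        _ ≤ ‖p.1‖ + ‖p.2‖ + ‖b‖ := by linarith [norm_add_le p.1 p.2]
    nlinarith [norm_nonneg p.1, norm_nonneg p.2, norm_nonneg b, norm_nonneg (p.1 + p.2 - b),
      sq_nonneg (‖p.1‖ - ‖p.2‖), sq_nonneg (‖p.1‖ - ‖b‖), sq_nonneg (‖p.2‖ - ‖b‖)]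
  refine Integrable.mono' ?_ ((hT.norm.pow 2).aestronglyMeasurable) (ae_of_all _ hbound)
  exact (((integrable_fst_sq h₁).const_mul 3).add ((integrable_snd_sq h₂).const_mul 3)).add
    (integrable_const _)

lemma convexOrderLE_conv (b : EuclideanSpace ℝ (Fin d))
    {μ₁ μ₂ : Measure (EuclideanSpace ℝ (Fin d))}
    [IsProbabilityMeasure μ₁] [IsProbabilityMeasure μ₂]
    (h₂ : Integrable (fun x : E => ‖x‖ ^ 2) μ₂)
    (hb : (∫ x, x ∂μ₂) = b) :
    ConvexOrderLE μ₁ ((μ₁.prod μ₂).map (fun p : E × E => p.1 + p.2 - b)) := by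
  intro φ hφ hint1 hint2
  have hT : Continuous (fun p : E × E => p.1 + p.2 - b) := by fun_prop
  have hφc : Continuous φ := continuous_of_convexOn hφ
  have hcomp : Integrable (fun p : E × E => φ (p.1 + p.2 - b)) (μ₁.prod μ₂) := by
    have := (integrable_map_measure hφc.aestronglyMeasurable hT.aemeasurable).1 hint2
    exact this
  have hmapint : ∫ x, φ x ∂((μ₁.prod μ₂).map (fun p : E × E => p.1 + p.2 - b))
      = ∫ p, φ (p.1 + p.2 - b) ∂(μ₁.prod μ₂) :=
    integral_map hT.aemeasurable hφc.aestronglyMeasurable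
  rw [hmapint, integral_prod _ hcomp]
  refine integral_mono_ae hint1 hcomp.integral_prod_left ?_
  filter_upwards [hcomp.prod_right_ae] with x hx
  have hid2 : Integrable (fun y : E => y) μ₂ := integrable_id_of_sq h₂
  have hid : Integrable (fun y : E => x + y - b) μ₂ := by
    have h := hid2.add (integrable_const (x - b))
    refine h.congr (ae_of_all _ fun y => ?_)
    simp only [Pi.add_apply]
    abel
  have hjensen := hφ.map_integral_le (hφc.continuousOn) isClosed_univ
    (ae_of_all _ fun y => Set.mem_univ _) hid (by exact hx)
  have hmean : ∫ y, (x + y - b) ∂μ₂ = x := by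
    have h1 : ∫ y, (x + y - b) ∂μ₂ = ∫ y, (y + (x - b)) ∂μ₂ := by
      congr 1; funext y; abel
    rw [h1, integral_add hid2 (integrable_const _), integral_const, hb]
    simp only [probReal_univ, one_smul]
    abel
  rw [hmean] at hjensen
  exact hjensen

lemma conv_swap (b : EuclideanSpace ℝ (Fin d)) (μ₁ μ₂ : Measure (EuclideanSpace ℝ (Fin d)))
    [SFinite μ₁] [SFinite μ₂] :
    ((μ₁.prod μ₂).map (fun p : E × E => p.1 + p.2 - b))
      = ((μ₂.prod μ₁).map (fun p : E × E => p.1 + p.2 - b)) := by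
  have hT : Measurable (fun p : E × E => p.1 + p.2 - b) := by
    exact ((measurable_fst.add measurable_snd).sub measurable_const)
  have hswap : (μ₂.prod μ₁) = (μ₁.prod μ₂).map Prod.swap := (Measure.prod_swap).symm
  rw [hswap, Measure.map_map hT measurable_swap]
  congr 1
  funext p
  simp [Prod.swap]
  abel

end Conv


section Ext

lemma convexOn_infDist {C : Set (EuclideanSpace ℝ (Fin d))} (hne : C.Nonempty)
    (hC : Convex ℝ C) : ConvexOn ℝ Set.univ (fun x : E => Metric.infDist x C) := by
  refine ⟨convex_univ, ?_⟩
  intro x _ z _ s t hs ht hst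
  simp only [smul_eq_mul]
  refine le_of_forall_pos_le_add fun ε hε => ?_
  have hx : Metric.infDist x C < Metric.infDist x C + ε := by linarith
  have hz : Metric.infDist z C < Metric.infDist z C + ε := by linarith
  obtain ⟨p, hp, hxp⟩ := (Metric.infDist_lt_iff hne).1 hx
  obtain ⟨q, hq, hzq⟩ := (Metric.infDist_lt_iff hne).1 hz
  have hmem : s • p + t • q ∈ C := hC hp hq hs ht hst
  have h1 : Metric.infDist (s • x + t • z) C ≤ dist (s • x + t • z) (s • p + t • q) :=
    Metric.infDist_le_dist_of_mem hmem
  have h2 : dist (s • x + t • z) (s • p + t • q) ≤ s * dist x p + t * dist z q := by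
    rw [dist_eq_norm, dist_eq_norm, dist_eq_norm]
    have h3 : (s • x + t • z) - (s • p + t • q) = s • (x - p) + t • (z - q) := by
      rw [smul_sub, smul_sub]; abel
    rw [h3]
    refine (norm_add_le _ _).trans ?_
    rw [norm_smul, norm_smul, Real.norm_eq_abs, Real.norm_eq_abs, abs_of_nonneg hs,
      abs_of_nonneg ht]
  nlinarith [mul_le_mul_of_nonneg_left hxp.le hs, mul_le_mul_of_nonneg_left hzq.le ht]

lemma borel_eq_generateFrom_convex :
    (inferInstance : MeasurableSpace (EuclideanSpace ℝ (Fin d)))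
      = MeasurableSpace.generateFrom {C : Set (EuclideanSpace ℝ (Fin d)) | IsClosed C ∧ Convex ℝ C} := by
  refine le_antisymm ?_ (MeasurableSpace.generateFrom_le fun C hC => hC.1.measurableSet)
  rw [(BorelSpace.measurable_eq
    : (inferInstance : MeasurableSpace (EuclideanSpace ℝ (Fin d))) = borel _)]
  rw [borel]
  refine MeasurableSpace.generateFrom_le fun U hU => ?_
  -- U is open; write it as a countable union of closed balls
  have hD := TopologicalSpace.denseRange_denseSeq (EuclideanSpace ℝ (Fin d))
  set D := TopologicalSpace.denseSeq (EuclideanSpace ℝ (Fin d)) with hD_def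
  have key : U = ⋃ (q : {q : ℕ × ℕ // Metric.closedBall (D q.1) (1 / (q.2 + 1)) ⊆ U}),
      Metric.closedBall (D q.1.1) (1 / (q.1.2 + 1)) := by
    ext w
    constructor
    · intro hw
      obtain ⟨ε, hε0, hball⟩ := Metric.isOpen_iff.1 (show IsOpen U from hU) w hw
      obtain ⟨n, hn⟩ := exists_nat_one_div_lt (show (0:ℝ) < ε / 2 by linarith)
      obtain ⟨m, hm⟩ := hD.exists_dist_lt w (show (0:ℝ) < 1 / (n + 1) by positivity)
      have hsub : Metric.closedBall (D m) (1 / (n + 1)) ⊆ U := by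
        intro y hy
        refine hball ?_
        rw [Metric.mem_ball]
        rw [Metric.mem_closedBall] at hy
        calc dist y w ≤ dist y (D m) + dist (D m) w := dist_triangle _ _ _
          _ ≤ 1 / (n + 1) + 1 / (n + 1) := by
              rw [dist_comm (D m) w]
              exact add_le_add hy hm.le
          _ < ε / 2 + ε / 2 := by push_cast; linarith
          _ = ε := by ring
      refine Set.mem_iUnion.2 ⟨⟨(m, n), hsub⟩, ?_⟩
      rw [Metric.mem_closedBall]
      push_cast
      exact hm.le
    · intro hw
      obtain ⟨q, hq⟩ := Set.mem_iUnion.1 hw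
      exact q.2 hq
  rw [key]
  refine MeasurableSet.iUnion fun q => ?_
  exact MeasurableSpace.measurableSet_generateFrom
    ⟨Metric.isClosed_closedBall, convex_closedBall _ _⟩

lemma measure_ext_of_convex_lipschitz {ν ρ : Measure (EuclideanSpace ℝ (Fin d))}
    [IsProbabilityMeasure ν] [IsProbabilityMeasure ρ]
    (hν2 : Integrable (fun x : E => ‖x‖ ^ 2) ν) (hρ2 : Integrable (fun x : E => ‖x‖ ^ 2) ρ)
    (h : ∀ g : EuclideanSpace ℝ (Fin d) → ℝ, ConvexOn ℝ Set.univ g →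
      (∃ K : ℝ≥0, LipschitzWith K g) → ∫ x, g x ∂ν = ∫ x, g x ∂ρ) : ν = ρ := by
  refine ext_of_generate_finite _ borel_eq_generateFrom_convex ?_ ?_ (by simp)
  · rintro C ⟨hCc, hCv⟩ Dset ⟨hDc, hDv⟩ _
    exact ⟨hCc.inter hDc, hCv.inter hDv⟩
  rintro C ⟨hCc, hCv⟩
  rcases Set.eq_empty_or_nonempty C with rfl | hne
  · simp
  -- use g_n = min 1 (n * infDist x C)
  set hdist : E → ℝ := fun x => Metric.infDist x C with hdist_def
  have hdist_conv : ConvexOn ℝ Set.univ hdist := convexOn_infDist hne hCv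
  have hdist_lip : LipschitzWith 1 hdist := Metric.lipschitz_infDist_pt C
  have hdist_nonneg : ∀ x : E, 0 ≤ hdist x := fun x => Metric.infDist_nonneg
  have hint : ∀ n : ℕ, ∫ x, min 1 ((n : ℝ) * hdist x) ∂ν = ∫ x, min 1 ((n : ℝ) * hdist x) ∂ρ := by
    intro n
    have hg1conv : ConvexOn ℝ Set.univ (fun x : E => (n : ℝ) * hdist x) := by
      refine ⟨convex_univ, ?_⟩
      intro x _ z _ s t hs ht hst
      simp only [smul_eq_mul]
      have := hdist_conv.2 (Set.mem_univ x) (Set.mem_univ z) hs ht hst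
      simp only [smul_eq_mul] at this
      nlinarith [mul_le_mul_of_nonneg_left this (Nat.cast_nonneg (α := ℝ) n)]
    have hg1lip : LipschitzWith (n : ℝ≥0) (fun x : E => (n : ℝ) * hdist x) := by
      refine LipschitzWith.of_dist_le_mul fun x y => ?_
      rw [Real.dist_eq]
      have h1 : |(n : ℝ) * hdist x - (n : ℝ) * hdist y| = (n : ℝ) * |hdist x - hdist y| := by
        rw [← mul_sub, abs_mul, abs_of_nonneg (Nat.cast_nonneg (α := ℝ) n)]
      rw [h1]
      have h2 := hdist_lip.dist_le_mul x y
      rw [Real.dist_eq] at h2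
      have : ((n : ℝ≥0) : ℝ) = (n : ℝ) := by simp
      rw [this]
      have h3 : (1 : ℝ≥0) * dist x y = dist x y := by simp
      rw [h3] at h2
      exact mul_le_mul_of_nonneg_left h2 (Nat.cast_nonneg (α := ℝ) n)
    have hg2conv : ConvexOn ℝ Set.univ (fun x : E => max ((n : ℝ) * hdist x - 1) 0) := by
      refine ⟨convex_univ, ?_⟩
      intro x _ z _ s t hs ht hst
      simp only [smul_eq_mul]
      have h1 := hg1conv.2 (Set.mem_univ x) (Set.mem_univ z) hs ht hst
      simp only [smul_eq_mul] at h1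
      have h2 : (n : ℝ) * hdist (s • x + t • z) - 1
          ≤ s * ((n : ℝ) * hdist x - 1) + t * ((n : ℝ) * hdist z - 1) := by
        have : s * 1 + t * 1 = 1 := by rw [mul_one, mul_one]; exact hst
        nlinarith [h1]
      rcases le_total ((n : ℝ) * hdist (s • x + t • z) - 1) 0 with hc | hc
      · rw [max_eq_right hc]
        have e1 : 0 ≤ s * max ((n : ℝ) * hdist x - 1) 0 :=
          mul_nonneg hs (le_max_right _ _)
        have e2 : 0 ≤ t * max ((n : ℝ) * hdist z - 1) 0 :=
          mul_nonneg ht (le_max_right _ _)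
        linarith
      · rw [max_eq_left hc]
        have e1 : s * ((n : ℝ) * hdist x - 1) ≤ s * max ((n : ℝ) * hdist x - 1) 0 :=
          mul_le_mul_of_nonneg_left (le_max_left _ _) hs
        have e2 : t * ((n : ℝ) * hdist z - 1) ≤ t * max ((n : ℝ) * hdist z - 1) 0 :=
          mul_le_mul_of_nonneg_left (le_max_left _ _) ht
        linarith
    have hg2lip : LipschitzWith (n : ℝ≥0) (fun x : E => max ((n : ℝ) * hdist x - 1) 0) := by
      refine LipschitzWith.of_dist_le_mul fun x y => ?_
      rw [Real.dist_eq]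
      have h1 : |max ((n : ℝ) * hdist x - 1) 0 - max ((n : ℝ) * hdist y - 1) 0|
          ≤ |((n : ℝ) * hdist x - 1) - ((n : ℝ) * hdist y - 1)| := abs_max_sub_max_le_abs _ _ _
      have h2 : ((n : ℝ) * hdist x - 1) - ((n : ℝ) * hdist y - 1)
          = (n : ℝ) * hdist x - (n : ℝ) * hdist y := by ring
      rw [h2] at h1
      refine h1.trans ?_
      have h3 := hg1lip.dist_le_mul x y
      rw [Real.dist_eq] at h3
      exact h3
    have e1 := h _ hg1conv ⟨_, hg1lip⟩
    have e2 := h _ hg2conv ⟨_, hg2lip⟩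
    have hmineq : ∀ x : E, min 1 ((n : ℝ) * hdist x)
        = (n : ℝ) * hdist x - max ((n : ℝ) * hdist x - 1) 0 := by
      intro x
      rcases le_total ((n : ℝ) * hdist x) 1 with hc | hc
      · rw [min_eq_right hc, max_eq_right (by linarith)]
        ring
      · rw [min_eq_left hc, max_eq_left (by linarith)]
        ring
    have hn1ν : Integrable (fun x : E => ‖x‖) ν := integrable_norm_of_sq hν2
    have hn1ρ : Integrable (fun x : E => ‖x‖) ρ := integrable_norm_of_sq hρ2
    have i1ν : Integrable (fun x : E => (n : ℝ) * hdist x) ν := lipschitzWith.integrable hn1ν hg1lip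
    have i1ρ : Integrable (fun x : E => (n : ℝ) * hdist x) ρ := lipschitzWith.integrable hn1ρ hg1lip
    have i2ν : Integrable (fun x : E => max ((n : ℝ) * hdist x - 1) 0) ν :=
      lipschitzWith.integrable hn1ν hg2lip
    have i2ρ : Integrable (fun x : E => max ((n : ℝ) * hdist x - 1) 0) ρ :=
      lipschitzWith.integrable hn1ρ hg2lip
    simp only [hmineq]
    rw [integral_sub i1ν i2ν, integral_sub i1ρ i2ρ, e1, e2]
  -- pass to the limit
  have hCme : MeasurableSet C := hCc.measurableSet
  have htend : ∀ (κ : Measure (EuclideanSpace ℝ (Fin d))), IsProbabilityMeasure κ →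
      Tendsto (fun n : ℕ => ∫ x, min 1 ((n : ℝ) * hdist x) ∂κ) atTop
        (𝓝 (∫ x, Set.indicator Cᶜ (fun _ => (1:ℝ)) x ∂κ)) := by
    intro κ hκ
    refine tendsto_integral_of_dominated_convergence (fun _ => (1:ℝ)) ?_ (integrable_const 1)
      ?_ ?_
    · intro n
      exact (continuous_const.min
        (continuous_const.mul (Metric.continuous_infDist_pt C))).aestronglyMeasurable
    · intro n
      filter_upwards with x
      rw [Real.norm_eq_abs, abs_of_nonneg (le_min zero_le_one
        (mul_nonneg (Nat.cast_nonneg _) (hdist_nonneg x)))]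
      exact min_le_left _ _
    · filter_upwards with x
      by_cases hx : x ∈ C
      · have h0 : hdist x = 0 := Metric.infDist_zero_of_mem hx
        have hind : Set.indicator Cᶜ (fun _ => (1:ℝ)) x = 0 := by
          simp [Set.indicator, hx]
        rw [hind]
        have : ∀ n : ℕ, min 1 ((n : ℝ) * hdist x) = 0 := by
          intro n
          rw [h0, mul_zero]
          simp
        simp only [this]
        exact tendsto_const_nhds
      · have hpos : 0 < hdist x := (hCc.notMem_iff_infDist_pos hne).1 hx
        have hev : ∀ᶠ n : ℕ in atTop, min 1 ((n : ℝ) * hdist x) = 1 := by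
          obtain ⟨N, hN⟩ := exists_nat_ge (1 / hdist x)
          filter_upwards [eventually_ge_atTop N] with n hn
          have hNn : (N : ℝ) ≤ (n : ℝ) := Nat.cast_le.2 hn
          have h1 : (1 : ℝ) ≤ (n : ℝ) * hdist x := by
            rw [div_le_iff₀ hpos] at hN
            nlinarith
          rw [min_eq_left h1]
        have hind : Set.indicator Cᶜ (fun _ => (1:ℝ)) x = 1 := by
          simp [Set.indicator, hx]
        rw [hind]
        exact Tendsto.congr' (hev.mono fun n h => h.symm) tendsto_const_nhds
  have hlim := tendsto_nhds_unique (htend ν inferInstance)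
    ((htend ρ inferInstance).congr fun n => (hint n).symm)
  rw [integral_indicator_const (1:ℝ) hCme.compl, integral_indicator_const (1:ℝ) hCme.compl]
    at hlim
  simp only [smul_eq_mul, mul_one] at hlim
  have hcompl : ν Cᶜ = ρ Cᶜ :=
    (ENNReal.toReal_eq_toReal_iff' (measure_ne_top ν _) (measure_ne_top ρ _)).1 hlim
  have h1 : ν C = 1 - ν Cᶜ := by
    rw [← prob_compl_eq_one_sub hCme.compl, compl_compl]
  have h2 : ρ C = 1 - ρ Cᶜ := by
    rw [← prob_compl_eq_one_sub hCme.compl, compl_compl]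
  rw [h1, h2, hcompl]

end Ext


section Assembly

lemma le_of_forall_div {x y : ℝ} {L : ℝ≥0} (h : ∀ t : ℝ, 0 < t → x ≤ y + (L : ℝ) ^ 2 / (2 * t)) :
    x ≤ y := by
  refine le_of_forall_pos_le_add fun δ hδ => ?_
  set t : ℝ := max 1 ((L : ℝ) ^ 2 / (2 * δ)) with ht_def
  have ht : 0 < t := lt_of_lt_of_le one_pos (le_max_left _ _)
  have h2 : (L : ℝ) ^ 2 / (2 * t) ≤ δ := by
    rw [div_le_iff₀ (by positivity)]
    have h3 : (L : ℝ) ^ 2 / (2 * δ) ≤ t := le_max_right _ _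
    rw [div_le_iff₀ (by positivity)] at h3
    nlinarith
  linarith [h t ht]

lemma convexOrderLE_refl (ν : Measure (EuclideanSpace ℝ (Fin d))) : ConvexOrderLE ν ν :=
  fun _ _ _ _ => le_rfl

lemma Cmin_eq_of_convexOrder {μ ν : Measure (EuclideanSpace ℝ (Fin d))}
    [IsProbabilityMeasure μ] [IsProbabilityMeasure ν]
    (hν2 : Integrable (fun x : E => ‖x‖ ^ 2) ν)
    (h : ConvexOrderLE μ ν) : Cmin μ ν = m2 ν := by
  have hmem : m2 ν ∈ {r : ℝ | ∃ ρ : Measure (EuclideanSpace ℝ (Fin d)),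
      IsProbabilityMeasure ρ ∧ Integrable (fun x => ‖x‖ ^ 2) ρ ∧ ConvexOrderLE μ ρ ∧
      ConvexOrderLE ν ρ ∧ r = m2 ρ} :=
    ⟨ν, inferInstance, hν2, h, convexOrderLE_refl ν, rfl⟩
  have hlb : ∀ r ∈ {r : ℝ | ∃ ρ : Measure (EuclideanSpace ℝ (Fin d)),
      IsProbabilityMeasure ρ ∧ Integrable (fun x => ‖x‖ ^ 2) ρ ∧ ConvexOrderLE μ ρ ∧
      ConvexOrderLE ν ρ ∧ r = m2 ρ}, m2 ν ≤ r := by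
    rintro r ⟨ρ, hρP, hρ2, hμρ, hνρ, rfl⟩
    exact hνρ _ convexOn_norm_sq hν2 hρ2
  exact le_antisymm (csInf_le ⟨m2 ν, fun r hr => hlb r hr⟩ hmem) (le_csInf ⟨_, hmem⟩ hlb)

lemma Cmin_set_nonempty (b : EuclideanSpace ℝ (Fin d))
    {μ ν : Measure (EuclideanSpace ℝ (Fin d))}
    [IsProbabilityMeasure μ] [IsProbabilityMeasure ν]
    (hμ2 : Integrable (fun x : E => ‖x‖ ^ 2) μ) (hν2 : Integrable (fun x : E => ‖x‖ ^ 2) ν)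
    (hμb : (∫ x, x ∂μ) = b) (hνb : (∫ x, x ∂ν) = b) :
    {r : ℝ | ∃ ρ : Measure (EuclideanSpace ℝ (Fin d)),
      IsProbabilityMeasure ρ ∧ Integrable (fun x => ‖x‖ ^ 2) ρ ∧ ConvexOrderLE μ ρ ∧
      ConvexOrderLE ν ρ ∧ r = m2 ρ}.Nonempty := by
  have hT : Continuous (fun p : E × E => p.1 + p.2 - b) := by fun_prop
  set ρ₀ : Measure (EuclideanSpace ℝ (Fin d)) :=
    (μ.prod ν).map (fun p : E × E => p.1 + p.2 - b) with hρ₀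
  haveI : IsProbabilityMeasure ρ₀ := Measure.isProbabilityMeasure_map hT.aemeasurable
  refine ⟨m2 ρ₀, ρ₀, inferInstance, integrable_sq_conv b hμ2 hν2, ?_, ?_, rfl⟩
  · exact convexOrderLE_conv b hν2 hνb
  · rw [hρ₀, conv_swap b μ ν]
    exact convexOrderLE_conv b hμ2 hμb

lemma lipschitz_le_of_Cmin (b : EuclideanSpace ℝ (Fin d))
    {μ ν : Measure (EuclideanSpace ℝ (Fin d))}
    [IsProbabilityMeasure μ] [IsProbabilityMeasure ν]
    (hμ2 : Integrable (fun x : E => ‖x‖ ^ 2) μ) (hν2 : Integrable (fun x : E => ‖x‖ ^ 2) ν)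
    (hμb : (∫ x, x ∂μ) = b) (hνb : (∫ x, x ∂ν) = b)
    (hC : Cmin μ ν = m2 ν) {g : EuclideanSpace ℝ (Fin d) → ℝ} {K : ℝ≥0}
    (hgc : ConvexOn ℝ Set.univ g) (hgl : LipschitzWith K g) :
    ∫ x, g x ∂μ ≤ ∫ x, g x ∂ν := by
  have hne := Cmin_set_nonempty b hμ2 hν2 hμb hνb
  have hmain : ∀ t : ℝ, 0 < t → ∫ x, g x ∂μ ≤ (∫ x, g x ∂ν) + (K : ℝ) ^ 2 / (2 * t) := by
    intro t ht
    refine le_of_forall_pos_le_add fun δ hδ => ?_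
    have hε : (0:ℝ) < 2 * δ / t := by positivity
    have hlt : sInf {r : ℝ | ∃ ρ : Measure (EuclideanSpace ℝ (Fin d)),
        IsProbabilityMeasure ρ ∧ Integrable (fun x => ‖x‖ ^ 2) ρ ∧ ConvexOrderLE μ ρ ∧
        ConvexOrderLE ν ρ ∧ r = m2 ρ} < m2 ν + 2 * δ / t := by
      have : sInf {r : ℝ | ∃ ρ : Measure (EuclideanSpace ℝ (Fin d)),
          IsProbabilityMeasure ρ ∧ Integrable (fun x => ‖x‖ ^ 2) ρ ∧ ConvexOrderLE μ ρ ∧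
          ConvexOrderLE ν ρ ∧ r = m2 ρ} = m2 ν := hC
      rw [this]
      linarith
    obtain ⟨r, hrS, hrlt⟩ := exists_lt_of_csInf_lt hne hlt
    obtain ⟨ρ, hρP, hρ2, hμρ, hνρ, rfl⟩ := hrS
    have h1 : ∫ x, g x ∂μ ≤ ∫ x, g x ∂ρ :=
      hμρ g hgc (lipschitzWith.integrable (integrable_norm_of_sq hμ2) hgl)
        (lipschitzWith.integrable (integrable_norm_of_sq hρ2) hgl)
    have h2 := moreau_bound hν2 hρ2 hνρ hgl ht
    have h3 : m2 ρ - m2 ν < 2 * δ / t := by linarith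
    have h4 : t / 2 * (m2 ρ - m2 ν) ≤ t / 2 * (2 * δ / t) :=
      mul_le_mul_of_nonneg_left h3.le (by positivity)
    have h5 : t / 2 * (2 * δ / t) = δ := by field_simp
    linarith
  exact le_of_forall_div hmain

lemma convexOrder_of_Cmin (b : EuclideanSpace ℝ (Fin d))
    {μ ν : Measure (EuclideanSpace ℝ (Fin d))}
    [IsProbabilityMeasure μ] [IsProbabilityMeasure ν]
    (hμ2 : Integrable (fun x : E => ‖x‖ ^ 2) μ) (hν2 : Integrable (fun x : E => ‖x‖ ^ 2) ν)
    (hμb : (∫ x, x ∂μ) = b) (hνb : (∫ x, x ∂ν) = b)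
    (hC : Cmin μ ν = m2 ν) : ConvexOrderLE μ ν := by
  intro φ hφ hint1 hint2
  obtain ⟨a, c, hac⟩ := exists_affine_minorant hφ
  set F : ℕ → EuclideanSpace ℝ (Fin d) → ℝ := fun n x => infConv φ (‖a‖ + (n : ℝ)) x with hF
  have hk : ∀ n : ℕ, ‖a‖ ≤ ‖a‖ + (n : ℝ) := fun n => le_add_of_nonneg_right (Nat.cast_nonneg n)
  have hk0 : ∀ n : ℕ, (0:ℝ) ≤ ‖a‖ + (n : ℝ) := fun n => (norm_nonneg a).trans (hk n)
  have hFlip : ∀ n : ℕ, LipschitzWith (Real.toNNReal (‖a‖ + (n : ℝ))) (F n) :=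
    fun n => infConv_lipschitz hac (hk n)
  have hFconv : ∀ n : ℕ, ConvexOn ℝ Set.univ (F n) :=
    fun n => infConv_convexOn hφ hac (hk n) (hk0 n)
  have hFle : ∀ (n : ℕ) (x : E), F n x ≤ φ x := fun n x => infConv_le hac (hk n) x
  have hFge : ∀ (n : ℕ) (x : E), a x + c ≤ F n x := fun n x => infConv_ge hac (hk n) x
  have haffμ : Integrable (fun x : E => a x + c) μ :=
    (a.integrable_comp (integrable_id_of_sq hμ2)).add (integrable_const c)
  have haffν : Integrable (fun x : E => a x + c) ν :=
    (a.integrable_comp (integrable_id_of_sq hν2)).add (integrable_const c)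
  have hbound : ∀ (n : ℕ) (x : E), ‖F n x‖ ≤ |φ x| + |a x + c| := by
    intro n x
    rw [Real.norm_eq_abs, abs_le]
    constructor
    · have h1 : -(|a x + c|) ≤ a x + c := neg_abs_le _
      have h2 : (0:ℝ) ≤ |φ x| := abs_nonneg _
      linarith [hFge n x]
    · have h1 : φ x ≤ |φ x| := le_abs_self _
      have h2 : (0:ℝ) ≤ |a x + c| := abs_nonneg _
      linarith [hFle n x]
  have hptwise : ∀ x : E, Tendsto (fun n : ℕ => F n x) atTop (𝓝 (φ x)) := by
    intro x
    rw [Metric.tendsto_atTop]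
    intro ε hε
    obtain ⟨K, hKa, hKprop⟩ := infConv_tendsto hφ hac x (half_pos hε)
    obtain ⟨N, hN⟩ := exists_nat_ge K
    refine ⟨N, fun n hn => ?_⟩
    have hKn : K ≤ ‖a‖ + (n : ℝ) := by
      have h1 : (N : ℝ) ≤ (n : ℝ) := Nat.cast_le.2 hn
      have h2 : (0:ℝ) ≤ ‖a‖ := norm_nonneg a
      linarith
    have h3 := hKprop _ hKn
    have h4 := hFle n x
    rw [Real.dist_eq, abs_lt]
    constructor
    · simp only [hF]
      linarith
    · simp only [hF]
      linarith
  have htendμ : Tendsto (fun n : ℕ => ∫ x, F n x ∂μ) atTop (𝓝 (∫ x, φ x ∂μ)) := by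
    refine tendsto_integral_of_dominated_convergence (fun x => |φ x| + |a x + c|)
      (fun n => (hFlip n).continuous.aestronglyMeasurable) (hint1.abs.add haffμ.abs)
      (fun n => ae_of_all _ (hbound n)) (ae_of_all _ hptwise)
  have htendν : Tendsto (fun n : ℕ => ∫ x, F n x ∂ν) atTop (𝓝 (∫ x, φ x ∂ν)) := by
    refine tendsto_integral_of_dominated_convergence (fun x => |φ x| + |a x + c|)
      (fun n => (hFlip n).continuous.aestronglyMeasurable) (hint2.abs.add haffν.abs)
      (fun n => ae_of_all _ (hbound n)) (ae_of_all _ hptwise)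
  refine le_of_tendsto_of_tendsto' htendμ htendν fun n => ?_
  exact lipschitz_le_of_Cmin b hμ2 hν2 hμb hνb hC (hFconv n) (hFlip n)

end Assembly

end Aux14


theorem stmt_14
    {d : ℕ} (b : EuclideanSpace ℝ (Fin d)) (μ ν : Measure (EuclideanSpace ℝ (Fin d)))
    [IsProbabilityMeasure μ] [IsProbabilityMeasure ν]
    (hμ2 : Integrable (fun x => ‖x‖ ^ 2) μ) (hν2 : Integrable (fun x => ‖x‖ ^ 2) ν)
    (hμb : bary μ = b) (hνb : bary ν = b) :
    (ConvexOrderLE μ ν ↔ Cmin μ ν = m2 ν) ∧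
    (ConvexOrderLE μ ν →
      ∀ ρ : Measure (EuclideanSpace ℝ (Fin d)), IsProbabilityMeasure ρ →
        Integrable (fun x => ‖x‖ ^ 2) ρ → ConvexOrderLE μ ρ → ConvexOrderLE ν ρ →
        m2 ρ = Cmin μ ν → ρ = ν) := by
  have hμb' : (∫ x, x ∂μ) = b := hμb
  have hνb' : (∫ x, x ∂ν) = b := hνb
  constructor
  · constructor
    · intro h
      exact Aux14.Cmin_eq_of_convexOrder hν2 h
    · intro h
      exact Aux14.convexOrder_of_Cmin b hμ2 hν2 hμb' hνb' h
  · intro hconv ρ hρP hρ2 hμρ hνρ hm2eq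
    haveI := hρP
    have hCm : Cmin μ ν = m2 ν := Aux14.Cmin_eq_of_convexOrder hν2 hconv
    have hm2' : m2 ρ = m2 ν := by rw [hm2eq, hCm]
    have hgeq : ∀ g : EuclideanSpace ℝ (Fin d) → ℝ, ConvexOn ℝ Set.univ g →
        (∃ K : NNReal, LipschitzWith K g) → ∫ x, g x ∂ν = ∫ x, g x ∂ρ := by
      rintro g hg ⟨K, hgl⟩
      have h1 : ∫ x, g x ∂ν ≤ ∫ x, g x ∂ρ :=
        hνρ g hg (Aux14.lipschitzWith.integrable (Aux14.integrable_norm_of_sq hν2) hgl)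
          (Aux14.lipschitzWith.integrable (Aux14.integrable_norm_of_sq hρ2) hgl)
      have h2 : ∫ x, g x ∂ρ ≤ ∫ x, g x ∂ν := by
        refine Aux14.le_of_forall_div (L := K) fun t ht => ?_
        have h3 := Aux14.moreau_bound hν2 hρ2 hνρ hgl ht
        rw [hm2'] at h3
        simpa using h3
      linarith
    exact (Aux14.measure_ext_of_convex_lipschitz hν2 hρ2 hgeq).symm

end
end
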